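/- arXiv:1710.07521 — 5 statements merged into one kernel-verified Lean document; each statement's English description precedes it below -/
import Mathlib

section
/- Let R be a real closed extension field of ℝ, n ∈ ℕ, and let M be a quadratic module of the polynomial ring 𝒪_R[X₁,…,Xₙ]. Then the following are equivalent: (a) M is Archimedean; (b) there exists N ∈ ℕ with N − (X₁² + … + Xₙ²) ∈ M; (c) there exists N ∈ ℕ such that N + Xᵢ ∈ M and N − Xᵢ ∈ M for all i ∈ {1,…,n}. -/
open MvPolynomial Finset

noncomputable section

/-- The subring of finite elements of a linearly ordered field. -/
def Ofin (R : Type) [Field R] [LinearOrder R] [IsStrictOrderedRing R] : Subring R where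
  carrier := {a : R | ∃ N : ℕ, |a| ≤ (N : R)}
  zero_mem' := ⟨0, by simp⟩
  one_mem' := ⟨1, by simp⟩
  add_mem' := by
    rintro a b ⟨N, hN⟩ ⟨M, hM⟩
    exact ⟨N + M, by push_cast; exact (abs_add_le a b).trans (add_le_add hN hM)⟩
  mul_mem' := by
    rintro a b ⟨N, hN⟩ ⟨M, hM⟩
    refine ⟨N * M, ?_⟩
    push_cast
    calc |a * b| = |a| * |b| := abs_mul a b
    _ ≤ (N : _) * (M : _) := mul_le_mul hN hM (abs_nonneg b) (Nat.cast_nonneg N)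
  neg_mem' := by
    rintro a ⟨N, hN⟩
    exact ⟨N, by rwa [abs_neg]⟩

/-- A real closed extension field of `ℝ`: an order-preserving ring embedding `ι : ℝ →+* R`
such that every nonnegative element of `R` is a square and every polynomial over `R` of
odd degree has a root. -/
structure RealClosedExt (R : Type) [Field R] [LinearOrder R] [IsStrictOrderedRing R] where
  ι : ℝ →+* R
  mono : ∀ a b : ℝ, a ≤ b → ι a ≤ ι b
  sq : ∀ a : R, 0 ≤ a → ∃ b : R, b ^ 2 = a
  oddRoot : ∀ p : Polynomial R, Odd p.natDegree → ∃ x : R, p.eval x = 0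

/-- An infinitesimal element of a linearly ordered field. -/
def Infinitesimal {R : Type} [Field R] [LinearOrder R] [IsStrictOrderedRing R] (a : R) : Prop :=
  ∀ N : ℕ, 0 < N → |a| ≤ (N : R)⁻¹

/-- `st` is a standard part map if `a - ι (st a)` is infinitesimal for every finite `a`. -/
def IsStandardPart {R : Type} [Field R] [LinearOrder R] [IsStrictOrderedRing R] (e : RealClosedExt R) (st : R → ℝ) : Prop :=
  ∀ a : R, a ∈ Ofin R → Infinitesimal (a - e.ι (st a))

/-- The embedding `ℝ →+* 𝒪_R` induced by `ι`. -/
def RealClosedExt.toOfin {R : Type} [Field R] [LinearOrder R] [IsStrictOrderedRing R] (e : RealClosedExt R) :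
    ℝ →+* Ofin R where
  toFun r := ⟨e.ι r, by
    refine ⟨⌈|r|⌉₊, ?_⟩
    have h2 : |e.ι r| ≤ e.ι |r| := by
      rw [abs_le]
      constructor
      · have h := e.mono (-|r|) r (neg_abs_le r)
        rwa [map_neg] at h
      · exact e.mono r |r| (le_abs_self r)
    refine h2.trans ?_
    have h3 := e.mono |r| (⌈|r|⌉₊ : ℝ) (Nat.le_ceil _)
    rwa [map_natCast] at h3⟩
  map_one' := Subtype.ext (map_one e.ι)
  map_mul' a b := Subtype.ext (map_mul e.ι a b)
  map_zero' := Subtype.ext (map_zero e.ι)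
  map_add' a b := Subtype.ext (map_add e.ι a b)

/-- Quadratic module of a commutative ring. -/
def IsQuadraticModule {A : Type*} [CommRing A] (M : Set A) : Prop :=
  (0 : A) ∈ M ∧ (1 : A) ∈ M ∧ (∀ a ∈ M, ∀ b ∈ M, a + b ∈ M) ∧
    ∀ a : A, ∀ p ∈ M, a ^ 2 * p ∈ M

/-- Archimedean subset of a commutative ring. -/
def IsArchimedean {A : Type*} [CommRing A] (M : Set A) : Prop :=
  ∀ a : A, ∃ N : ℕ, (N : A) + a ∈ M ∧ (N : A) - a ∈ M

/-- The ideal `I_x` generated by the `X i - x i`. -/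
def idealAt {R : Type} [Field R] [LinearOrder R] [IsStrictOrderedRing R] {n : ℕ} (x : Fin n → Ofin R) :
    Ideal (MvPolynomial (Fin n) (Ofin R)) :=
  Ideal.span (Set.range fun i => X i - C (x i))

/-- The polynomial `u_x = (X₁-x₁)² + … + (Xₙ-xₙ)²` over `𝒪_R`. -/
def uPolyO {R : Type} [Field R] [LinearOrder R] [IsStrictOrderedRing R] {n : ℕ} (x : Fin n → Ofin R) :
    MvPolynomial (Fin n) (Ofin R) :=
  ∑ i, (X i - C (x i)) ^ 2

/-- Evaluation of a polynomial with coefficients in `𝒪_R` at a point of `Rⁿ`. -/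
def evalR {R : Type} [Field R] [LinearOrder R] [IsStrictOrderedRing R] {n : ℕ} (x : Fin n → R)
    (p : MvPolynomial (Fin n) (Ofin R)) : R :=
  eval₂ (Ofin R).subtype x p

/-- `vᵀ (Hess p)(x) v`, computed in `R`, for a real vector `v`. -/
def hessQuadO {R : Type} [Field R] [LinearOrder R] [IsStrictOrderedRing R] (e : RealClosedExt R) {n : ℕ}
    (p : MvPolynomial (Fin n) (Ofin R)) (x : Fin n → Ofin R) (v : Fin n → ℝ) : R :=
  ∑ a, ∑ b, e.ι (v a) * ((eval x (pderiv a (pderiv b p)) : Ofin R) : R) * e.ι (v b)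

/-- The set `S := {x ∈ ℝⁿ : st (p(x)) ≥ 0 for all p ∈ M}`. -/
def Sof {R : Type} [Field R] [LinearOrder R] [IsStrictOrderedRing R] (e : RealClosedExt R) (st : R → ℝ) {n : ℕ}
    (M : Set (MvPolynomial (Fin n) (Ofin R))) : Set (Fin n → ℝ) :=
  {y | ∀ p ∈ M, 0 ≤ st (evalR (fun i => e.ι (y i)) p)}

/-- A state of `(I, M ∩ I, u)`: an `ℝ`-linear functional on `I`, nonnegative on `M ∩ I` and
normalized at `u` (encoded as a function on the polynomial ring whose values off `I`
are irrelevant). -/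
def IsStateOn {R : Type} [Field R] [LinearOrder R] [IsStrictOrderedRing R] (e : RealClosedExt R) {n : ℕ}
    (M : Set (MvPolynomial (Fin n) (Ofin R))) (I : Ideal (MvPolynomial (Fin n) (Ofin R)))
    (u : MvPolynomial (Fin n) (Ofin R)) (φ : MvPolynomial (Fin n) (Ofin R) → ℝ) : Prop :=
  (∀ p ∈ I, ∀ q ∈ I, φ (p + q) = φ p + φ q) ∧
  (∀ r : ℝ, ∀ p ∈ I, φ (C (e.toOfin r) * p) = r * φ p) ∧
  (∀ p ∈ I, p ∈ M → 0 ≤ φ p) ∧ φ u = 1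

/-- A pure state: an extreme point of the state space (no two distinct states have it
as their midpoint). -/
def IsPureStateOn {R : Type} [Field R] [LinearOrder R] [IsStrictOrderedRing R] (e : RealClosedExt R) {n : ℕ}
    (M : Set (MvPolynomial (Fin n) (Ofin R))) (I : Ideal (MvPolynomial (Fin n) (Ofin R)))
    (u : MvPolynomial (Fin n) (Ofin R)) (φ : MvPolynomial (Fin n) (Ofin R) → ℝ) : Prop :=
  IsStateOn e M I u φ ∧
    ∀ ψ₁ ψ₂, IsStateOn e M I u ψ₁ → IsStateOn e M I u ψ₂ →
      (∀ p ∈ I, φ p = (ψ₁ p + ψ₂ p) / 2) → ∀ p ∈ I, ψ₁ p = ψ₂ p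

/-- A sum of squares in a commutative ring. -/
def IsSOS {A : Type*} [CommRing A] (p : A) : Prop :=
  ∃ (k : ℕ) (q : Fin k → A), p = ∑ i, (q i) ^ 2

/-- The basic closed semialgebraic set `S(g)`. -/
def Sset {n m : ℕ} (g : Fin m → MvPolynomial (Fin n) ℝ) : Set (Fin n → ℝ) :=
  {x | ∀ i, 0 ≤ eval x (g i)}

/-- The quadratic module `M(g)` generated by `g` in `ℝ[X]`. -/
def QModGen {n m : ℕ} (g : Fin m → MvPolynomial (Fin n) ℝ) : Set (MvPolynomial (Fin n) ℝ) :=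
  {f | ∃ (σ₀ : MvPolynomial (Fin n) ℝ) (σ : Fin m → MvPolynomial (Fin n) ℝ),
    IsSOS σ₀ ∧ (∀ i, IsSOS (σ i)) ∧ f = σ₀ + ∑ i, σ i * g i}

/-- `g` extended by `g₀ := 1` (the index `none` corresponds to `g₀`). -/
def gext {n m : ℕ} (g : Fin m → MvPolynomial (Fin n) ℝ) :
    Option (Fin m) → MvPolynomial (Fin n) ℝ :=
  fun o => o.elim 1 g

/-- The `d`-truncated quadratic module `M_d(g)`: finite sums of terms `p² gᵢ`
(`g₀ := 1`), each of degree at most `d`. -/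
def Mtrunc {n m : ℕ} (g : Fin m → MvPolynomial (Fin n) ℝ) (d : ℕ) :
    Set (MvPolynomial (Fin n) ℝ) :=
  {f | ∃ (k : ℕ) (idx : Fin k → Option (Fin m)) (p : Fin k → MvPolynomial (Fin n) ℝ),
    (∀ j, ((p j) ^ 2 * gext g (idx j)).totalDegree ≤ d) ∧
      f = ∑ j, (p j) ^ 2 * gext g (idx j)}

/-- The polynomial `u_x = (X₁-x₁)² + … + (Xₙ-xₙ)²` over `ℝ`. -/
def uPoly {n : ℕ} (x : Fin n → ℝ) : MvPolynomial (Fin n) ℝ :=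
  ∑ i, (X i - C (x i)) ^ 2

/-- The open Euclidean ball of radius `ε` around `x`. -/
def eball {n : ℕ} (x : Fin n → ℝ) (ε : ℝ) : Set (Fin n → ℝ) :=
  {y | ∑ i, (y i - x i) ^ 2 < ε ^ 2}

/-- `vᵀ (Hess f)(x) v`, where `Hess f` is the formal Hessian matrix of `f`. -/
def hessQuad {n : ℕ} (f : MvPolynomial (Fin n) ℝ) (x : Fin n → ℝ) (v : Fin n → ℝ) : ℝ :=
  ∑ a, ∑ b, v a * eval x (pderiv a (pderiv b f)) * v b

/-- `(∇ f)(x)ᵀ v`. -/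
def gradDot {n : ℕ} (f : MvPolynomial (Fin n) ℝ) (x v : Fin n → ℝ) : ℝ :=
  ∑ i, eval x (pderiv i f) * v i

/-- Strict quasiconcavity of `g` at `x`. -/
def StrictQuasiconcaveAt {n : ℕ} (g : MvPolynomial (Fin n) ℝ) (x : Fin n → ℝ) : Prop :=
  ∀ v : Fin n → ℝ, v ≠ 0 → gradDot g x v = 0 → hessQuad g x v < 0

/-- The real zero set `Z(g)`. -/
def Zset {n : ℕ} (g : MvPolynomial (Fin n) ℝ) : Set (Fin n → ℝ) :=
  {x | eval x g = 0}

/-- The convex boundary `convbd S = S ∩ ∂(conv S)`. -/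
def convbd {n : ℕ} (S : Set (Fin n → ℝ)) : Set (Fin n → ℝ) :=
  S ∩ frontier (convexHull ℝ S)

/-- The optimal value `las_d(f, g)` of the degree-`d` Lasserre relaxation. -/
def lasVal {n m : ℕ} (g : Fin m → MvPolynomial (Fin n) ℝ) (d : ℕ)
    (f : MvPolynomial (Fin n) ℝ) : EReal :=
  ⨅ L : {L : MvPolynomial (Fin n) ℝ →ₗ[ℝ] ℝ // (∀ p ∈ Mtrunc g d, 0 ≤ L p) ∧ L 1 = 1},
    ((L.1 f : ℝ) : EReal)

/-- The degree-`d` Lasserre relaxation set `S_d(g)`. -/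
def lasRelax {n m : ℕ} (g : Fin m → MvPolynomial (Fin n) ℝ) (d : ℕ) : Set (Fin n → ℝ) :=
  {y | ∃ L : MvPolynomial (Fin n) ℝ →ₗ[ℝ] ℝ,
    (∀ p ∈ Mtrunc g d, 0 ≤ L p) ∧ L 1 = 1 ∧ ∀ i, L (X i) = y i}

end
section QMAux

variable {R : Type} [Field R] [LinearOrder R] [IsStrictOrderedRing R] {n : ℕ}
  {M : Set (MvPolynomial (Fin n) (Ofin R))}

local notation "A" => MvPolynomial (Fin n) (Ofin R)

lemma qm_sq_mem (hM : IsQuadraticModule M) (p : A) : p ^ 2 ∈ M := by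
  simpa using hM.2.2.2 p 1 hM.2.1

lemma qm_sum_mem (hM : IsQuadraticModule M) {ι : Type*} (s : Finset ι) (f : ι → A)
    (hf : ∀ j ∈ s, f j ∈ M) : ∑ j ∈ s, f j ∈ M := by
  classical
  induction s using Finset.cons_induction with
  | empty => simpa using hM.1
  | cons i s hi ih =>
    rw [Finset.sum_cons]
    exact hM.2.2.1 _ (hf i (Finset.mem_cons_self i s))
      _ (ih fun j hj => hf j (Finset.mem_cons_of_mem hj))

lemma qm_const_mul_mem (e : RealClosedExt R) (hM : IsQuadraticModule M)
    {c : Ofin R} (hc : 0 ≤ (c : R)) {p : A} (hp : p ∈ M) : C c * p ∈ M := by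
  obtain ⟨b, hb⟩ := e.sq (c : R) hc
  obtain ⟨K, hK⟩ := c.2
  have hbO : b ∈ Ofin R := by
    refine ⟨K + 1, ?_⟩
    have h1 : |b| ^ 2 = (c : R) := by rw [sq_abs]; exact hb
    have h2 : (c : R) ≤ K := (le_abs_self _).trans hK
    push_cast
    nlinarith [abs_nonneg b, sq_nonneg (|b| - 1), Nat.cast_nonneg (α := R) K]
  set b' : Ofin R := ⟨b, hbO⟩
  have hb' : b' ^ 2 = c := Subtype.ext (by push_cast; exact hb)
  rw [← hb', map_pow]
  exact hM.2.2.2 _ p hp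

lemma qm_const_mem (e : RealClosedExt R) (hM : IsQuadraticModule M)
    {c : Ofin R} (hc : 0 ≤ (c : R)) : (C c : A) ∈ M := by
  simpa using qm_const_mul_mem e hM hc hM.2.1

lemma qm_nat_mem (e : RealClosedExt R) (hM : IsQuadraticModule M) (N : ℕ) : (N : A) ∈ M := by
  rw [← map_natCast (C : Ofin R →+* A)]
  exact qm_const_mem e hM (by push_cast; positivity)

lemma qm_nat_mul_mem (hM : IsQuadraticModule M) (K : ℕ) {m : A} (hm : m ∈ M) :
    (K : A) * m ∈ M := by
  induction K with
  | zero => simpa using hM.1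
  | succ k ih =>
    have : ((k + 1 : ℕ) : A) * m = (k : A) * m + m := by push_cast; ring
    rw [this]
    exact hM.2.2.1 _ ih _ hm

/-- bounded squares: closure under addition -/
lemma qm_bdd_add (hM : IsQuadraticModule M) {p q : A}
    (hp : ∃ K : ℕ, (K : A) - p ^ 2 ∈ M) (hq : ∃ K : ℕ, (K : A) - q ^ 2 ∈ M) :
    ∃ K : ℕ, (K : A) - (p + q) ^ 2 ∈ M := by
  obtain ⟨K, hK⟩ := hp
  obtain ⟨L, hL⟩ := hq
  refine ⟨2 * (K + L), ?_⟩
  have heq : ((2 * (K + L) : ℕ) : A) - (p + q) ^ 2 =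
      (p - q) ^ 2 + (((K : A) - p ^ 2) + ((K : A) - p ^ 2)) +
        (((L : A) - q ^ 2) + ((L : A) - q ^ 2)) := by push_cast; ring
  rw [heq]
  exact hM.2.2.1 _ (hM.2.2.1 _ (qm_sq_mem hM _) _ (hM.2.2.1 _ hK _ hK)) _ (hM.2.2.1 _ hL _ hL)

lemma qm_bdd_mul (hM : IsQuadraticModule M) {p q : A}
    (hp : ∃ K : ℕ, (K : A) - p ^ 2 ∈ M) (hq : ∃ K : ℕ, (K : A) - q ^ 2 ∈ M) :
    ∃ K : ℕ, (K : A) - (p * q) ^ 2 ∈ M := by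
  obtain ⟨K, hK⟩ := hp
  obtain ⟨L, hL⟩ := hq
  refine ⟨K * L, ?_⟩
  have heq : ((K * L : ℕ) : A) - (p * q) ^ 2 =
      q ^ 2 * ((K : A) - p ^ 2) + (K : A) * ((L : A) - q ^ 2) := by push_cast; ring
  rw [heq]
  exact hM.2.2.1 _ (hM.2.2.2 q _ hK) _ (qm_nat_mul_mem hM K hL)

lemma qm_bdd_const (e : RealClosedExt R) (hM : IsQuadraticModule M) (c : Ofin R) :
    ∃ K : ℕ, (K : A) - (C c) ^ 2 ∈ M := by
  obtain ⟨K, hK⟩ := c.2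
  refine ⟨K ^ 2, ?_⟩
  have heq : ((K ^ 2 : ℕ) : A) - (C c : A) ^ 2 = C ((K ^ 2 : Ofin R) - c ^ 2) := by
    rw [map_sub, map_pow, map_pow, map_natCast]; push_cast; ring
  rw [heq]
  refine qm_const_mem e hM ?_
  have : ((((K : ℕ) ^ 2 : Ofin R) - c ^ 2 : Ofin R) : R) = (K : R) ^ 2 - (c : R) ^ 2 := by
    push_cast; ring
  rw [this]
  nlinarith [sq_abs (c : R), abs_nonneg (c : R), hK]

set_option maxHeartbeats 1000000 in
lemma qm_bdd_of_bounds (e : RealClosedExt R) (hM : IsQuadraticModule M) {p : A} {N : ℕ}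
    (h1 : (N : A) + p ∈ M) (h2 : (N : A) - p ∈ M) :
    ∃ K : ℕ, (K : A) - p ^ 2 ∈ M := by
  suffices H : ∀ m : ℕ, 1 ≤ m → ((m : A) + p ∈ M) → ((m : A) - p ∈ M) →
      ∃ K : ℕ, (K : A) - p ^ 2 ∈ M by
    refine H (N + 1) (by omega) ?_ ?_
    · have := hM.2.2.1 _ h1 _ hM.2.1
      have he : ((N + 1 : ℕ) : A) + p = ((N : A) + p) + 1 := by push_cast; ring
      rwa [he]
    · have := hM.2.2.1 _ h2 _ hM.2.1
      have he : ((N + 1 : ℕ) : A) - p = ((N : A) - p) + 1 := by push_cast; ring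
      rwa [he]
  clear h1 h2
  intro m hm h1 h2
  have h4m : (0 : R) < 4 * (m : R) := by positivity
  obtain ⟨b, hb⟩ := e.sq ((4 * (m : R)))⁻¹ (by positivity)
  have hb1 : b ^ 2 ≤ 1 := by
    rw [hb]
    have h1m : (1 : R) ≤ (m : R) := by exact_mod_cast hm
    have : (1 : R) ≤ 4 * (m : R) := by linarith
    exact inv_le_one_of_one_le₀ this
  have hbO : b ∈ Ofin R := by
    refine ⟨1, ?_⟩
    have := sq_abs b
    push_cast
    nlinarith [abs_nonneg b, sq_nonneg (|b| - 1)]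
  set r : Ofin R := ⟨b, hbO⟩ with hrdef
  have hr : ((4 * m : ℕ) : Ofin R) * r ^ 2 = 1 := by
    apply Subtype.ext
    push_cast
    rw [hb]
    exact mul_inv_cancel₀ (ne_of_gt h4m)
  have hrA : ((4 * m : ℕ) : A) * (C r : A) ^ 2 = 1 := by
    rw [← map_natCast (C : Ofin R →+* A) (4 * m), ← map_pow, ← map_mul,
      ← map_one (C : Ofin R →+* A)]
    exact congrArg (⇑(C : Ofin R →+* (MvPolynomial (Fin n) (Ofin R)))) hr
  push_cast at hrA
  refine ⟨m ^ 2, ?_⟩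
  have heq : ((m ^ 2 : ℕ) : A) - p ^ 2 =
      (C r * ((m : A) - p)) ^ 2 * ((m : A) + p) +
      (C r * ((m : A) + p)) ^ 2 * ((m : A) - p) +
      ((C r * ((m : A) - p)) ^ 2 * ((m : A) + p) +
      (C r * ((m : A) + p)) ^ 2 * ((m : A) - p)) := by
    push_cast
    linear_combination (p ^ 2 - (m : A) ^ 2) * hrA
  rw [heq]
  exact hM.2.2.1 _ (hM.2.2.1 _ (hM.2.2.2 _ _ h1) _ (hM.2.2.2 _ _ h2))
    _ (hM.2.2.1 _ (hM.2.2.2 _ _ h1) _ (hM.2.2.2 _ _ h2))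

/-- From a square bound to linear bounds. -/
lemma qm_bounds_of_bdd (e : RealClosedExt R) (hM : IsQuadraticModule M) {p : A}
    (hp : ∃ K : ℕ, (K : A) - p ^ 2 ∈ M) :
    ∃ K : ℕ, (K : A) + p ∈ M ∧ (K : A) - p ∈ M := by
  obtain ⟨K, hK⟩ := hp
  have hhalfO : (2 : R)⁻¹ ∈ Ofin R := by
    refine ⟨1, ?_⟩
    rw [abs_of_nonneg (by norm_num)]
    push_cast
    norm_num
  set h : Ofin R := ⟨(2 : R)⁻¹, hhalfO⟩
  have h2 : (C h : A) + C h = 1 := by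
    have hO : h + h = 1 := Subtype.ext (by push_cast; norm_num)
    rw [← MvPolynomial.C_add, hO, map_one]
  have hq : (0 : R) ≤ ((1 - h ^ 2 : Ofin R) : R) := by
    push_cast
    norm_num
  have hqm : (C (1 - h ^ 2) : A) ∈ M := qm_const_mem e hM hq
  have hCC : (C (1 - h ^ 2) : A) = 1 - (C h) ^ 2 := by
    rw [map_sub, map_pow, map_one]
  refine ⟨K + 1, ?_, ?_⟩
  · have heq : ((K + 1 : ℕ) : A) + p =
        ((K : A) - p ^ 2) + (p + C h) ^ 2 + C (1 - h ^ 2) := by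
      rw [hCC]; push_cast
      linear_combination (-p) * h2
    rw [heq]
    exact hM.2.2.1 _ (hM.2.2.1 _ hK _ (qm_sq_mem hM _)) _ hqm
  · have heq : ((K + 1 : ℕ) : A) - p =
        ((K : A) - p ^ 2) + (p - C h) ^ 2 + C (1 - h ^ 2) := by
      rw [hCC]; push_cast
      linear_combination p * h2
    rw [heq]
    exact hM.2.2.1 _ (hM.2.2.1 _ hK _ (qm_sq_mem hM _)) _ hqm

lemma qm_arch_of_bddX (e : RealClosedExt R) (hM : IsQuadraticModule M)
    (hX : ∀ i : Fin n, ∃ K : ℕ, (K : A) - (X i) ^ 2 ∈ M) : IsArchimedean M := by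
  have hall : ∀ p : A, ∃ K : ℕ, (K : A) - p ^ 2 ∈ M := by
    intro p
    induction p using MvPolynomial.induction_on with
    | C c => exact qm_bdd_const e hM c
    | add p q hp hq => exact qm_bdd_add hM hp hq
    | mul_X p i hp => exact qm_bdd_mul hM hp (hX i)
  intro a
  exact qm_bounds_of_bdd e hM (hall a)

end QMAux

theorem statement_0 {R : Type} [Field R] [LinearOrder R] [IsStrictOrderedRing R] (e : RealClosedExt R) (n : ℕ)
    (M : Set (MvPolynomial (Fin n) (Ofin R))) (hM : IsQuadraticModule M) :
    (IsArchimedean M ↔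
      ∃ N : ℕ, (N : MvPolynomial (Fin n) (Ofin R)) - ∑ i, (X i) ^ 2 ∈ M) ∧
    (IsArchimedean M ↔
      ∃ N : ℕ, ∀ i : Fin n,
        (N : MvPolynomial (Fin n) (Ofin R)) + X i ∈ M ∧
        (N : MvPolynomial (Fin n) (Ofin R)) - X i ∈ M) := by
  classical
  constructor
  · constructor
    · intro hA
      obtain ⟨N, _, h2⟩ := hA (∑ i, (X i : MvPolynomial (Fin n) (Ofin R)) ^ 2)
      exact ⟨N, h2⟩
    · rintro ⟨N, hN⟩
      apply qm_arch_of_bddX e hM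
      intro i
      refine ⟨N, ?_⟩
      have heq : (N : MvPolynomial (Fin n) (Ofin R)) - (X i) ^ 2 =
          ((N : MvPolynomial (Fin n) (Ofin R)) - ∑ j, (X j) ^ 2) +
            ∑ j ∈ Finset.univ.erase i, (X j) ^ 2 := by
        rw [← Finset.add_sum_erase _ _ (Finset.mem_univ i)]
        ring
      rw [heq]
      exact hM.2.2.1 _ hN _ (qm_sum_mem hM _ _ fun j _ => qm_sq_mem hM _)
  · constructor
    · intro hA
      choose N hN using fun i => hA (X i : MvPolynomial (Fin n) (Ofin R))
      refine ⟨Finset.univ.sup N, fun i => ?_⟩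
      have hle : N i ≤ Finset.univ.sup N := Finset.le_sup (Finset.mem_univ i)
      obtain ⟨d, hd⟩ : ∃ d, Finset.univ.sup N = d + N i ∧ d = Finset.univ.sup N - N i :=
        ⟨_, (Nat.sub_add_cancel hle).symm, rfl⟩
      constructor
      · have heq : ((Finset.univ.sup N : ℕ) : MvPolynomial (Fin n) (Ofin R)) + X i =
            ((d : ℕ) : MvPolynomial (Fin n) (Ofin R)) +
              ((N i : MvPolynomial (Fin n) (Ofin R)) + X i) := by
          rw [hd.1]; push_cast; ring
        rw [heq]
        exact hM.2.2.1 _ (qm_nat_mem e hM _) _ (hN i).1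
      · have heq : ((Finset.univ.sup N : ℕ) : MvPolynomial (Fin n) (Ofin R)) - X i =
            ((d : ℕ) : MvPolynomial (Fin n) (Ofin R)) +
              ((N i : MvPolynomial (Fin n) (Ofin R)) - X i) := by
          rw [hd.1]; push_cast; ring
        rw [heq]
        exact hM.2.2.1 _ (qm_nat_mem e hM _) _ (hN i).2
    · rintro ⟨N, hN⟩
      apply qm_arch_of_bddX e hM
      intro i
      exact qm_bdd_of_bounds e hM (hN i).1 (hN i).2
end

section
/- Let R be a real closed extension field of ℝ, let x ∈ 𝒪_Rⁿ, and let φ : I_x² → ℝ be an ℝ-linear map such that φ(p) ≥ 0 for every p ∈ I_x² that is a sum of squares of polynomials in 𝒪_R[X₁,…,Xₙ], φ(u_x) = 1, and φ vanishes on I_x³. Then there exist v₁,…,vₙ ∈ ℝⁿ with Σ_{i=1}^n vᵢᵀvᵢ = 1 such that φ(p) = (1/2)·st(Σ_{i=1}^n vᵢᵀ(Hess p)(x)vᵢ) for all p ∈ I_x², where Hess p denotes the matrix of formal second partial derivatives of p. -/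
open MvPolynomial Finset

set_option synthInstance.maxHeartbeats 1000000
set_option maxHeartbeats 2000000

section StLemmas

variable {R : Type} [Field R] [LinearOrder R] [IsStrictOrderedRing R] (e : RealClosedExt R)

lemma iota_strictMono : StrictMono e.ι := by
  have hinj : Function.Injective e.ι := e.ι.injective
  have hmono : Monotone e.ι := fun a b hab => e.mono a b hab
  exact hmono.strictMono_of_injective hinj

lemma iota_abs (r : ℝ) : |e.ι r| = e.ι |r| := by
  rcases abs_cases r with ⟨h1, h2⟩ | ⟨h1, h2⟩
  · rw [h1, abs_of_nonneg]
    rw [← map_zero e.ι]; exact e.mono _ _ h2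
  · rw [h1, map_neg, abs_of_nonpos]
    rw [← map_zero e.ι]; exact e.mono _ _ h2.le

lemma eq_zero_of_infinitesimal_iota {r : ℝ} (h : Infinitesimal (e.ι r)) : r = 0 := by
  by_contra hr
  obtain ⟨N, hN⟩ := exists_nat_gt |r|⁻¹
  have hNpos : 0 < N := by
    have : (0:ℝ) < N := lt_of_le_of_lt (inv_nonneg.2 (abs_nonneg r)) hN
    exact_mod_cast this
  have h1 := h N hNpos
  rw [iota_abs] at h1
  have h2 : ((N:R))⁻¹ = e.ι ((N:ℝ))⁻¹ := by
    rw [map_inv₀, map_natCast]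
  rw [h2] at h1
  have h3 : |r| ≤ ((N:ℝ))⁻¹ := (iota_strictMono e).le_iff_le.mp h1
  have hrpos : 0 < |r| := abs_pos.2 hr
  have hNpos' : (0:ℝ) < N := by exact_mod_cast hNpos
  have hmul : (N:ℝ) * |r| ≤ 1 := by
    calc (N:ℝ) * |r| ≤ (N:ℝ) * (N:ℝ)⁻¹ := by nlinarith
    _ = 1 := mul_inv_cancel₀ hNpos'.ne'
  have hgt : 1 < (N:ℝ) * |r| := by
    calc 1 = |r|⁻¹ * |r| := (inv_mul_cancel₀ hrpos.ne').symm
    _ < (N:ℝ) * |r| := by nlinarith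
  linarith

end StLemmas

section InfLemmas

variable {R : Type} [Field R] [LinearOrder R] [IsStrictOrderedRing R]

lemma Infinitesimal.add' {a b : R} (ha : Infinitesimal a) (hb : Infinitesimal b) :
    Infinitesimal (a + b) := by
  intro N hN
  have h2N : 0 < 2 * N := by omega
  have ha' := ha (2 * N) h2N
  have hb' := hb (2 * N) h2N
  have hNR : (0:R) < (N : R) := by exact_mod_cast hN
  have h2NR : (0:R) < ((2 * N : ℕ) : R) := by exact_mod_cast h2N
  calc |a + b| ≤ |a| + |b| := abs_add_le a b
  _ ≤ ((2 * N : ℕ) : R)⁻¹ + ((2 * N : ℕ) : R)⁻¹ := add_le_add ha' hb'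
  _ ≤ (N : R)⁻¹ := by
      rw [← two_mul]
      rw [Nat.cast_mul, Nat.cast_ofNat]
      rw [mul_inv]
      rw [← mul_assoc, mul_inv_cancel₀ (two_ne_zero), one_mul]

lemma Infinitesimal.neg' {a : R} (ha : Infinitesimal a) : Infinitesimal (-a) := by
  intro N hN; rw [abs_neg]; exact ha N hN

lemma Infinitesimal.mul_fin {a b : R} (ha : Infinitesimal a) (hb : b ∈ Ofin R) :
    Infinitesimal (a * b) := by
  obtain ⟨M, hM⟩ := hb
  intro N hN
  have hNM : 0 < N * (M + 1) := by positivity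
  have ha' := ha (N * (M + 1)) hNM
  have habs : 0 ≤ |a| := abs_nonneg a
  have hNMR : (0:R) < ((N * (M + 1) : ℕ) : R) := by exact_mod_cast hNM
  have hNR : (0:R) < (N : R) := by exact_mod_cast hN
  have hM1R : (0:R) < ((M + 1 : ℕ) : R) := by exact_mod_cast Nat.succ_pos M
  rw [abs_mul]
  calc |a| * |b| ≤ ((N * (M+1) : ℕ) : R)⁻¹ * ((M+1 : ℕ) : R) := by
        apply mul_le_mul ha' _ (abs_nonneg b) (inv_nonneg.2 hNMR.le)
        calc |b| ≤ (M : R) := hM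
        _ ≤ ((M+1 : ℕ) : R) := by push_cast; linarith
  _ = (N : R)⁻¹ := by
        rw [Nat.cast_mul, mul_inv, mul_assoc, inv_mul_cancel₀ hM1R.ne', mul_one]

end InfLemmas

section StPart

variable {R : Type} [Field R] [LinearOrder R] [IsStrictOrderedRing R] (e : RealClosedExt R) (st : R → ℝ)

lemma st_unique (hst : IsStandardPart e st) {a : R} (ha : a ∈ Ofin R) {r : ℝ} (h : Infinitesimal (a - e.ι r)) :
    st a = r := by
  have h1 := hst a ha
  have h2 : Infinitesimal (e.ι (r - st a)) := by
    have : e.ι (r - st a) = (a - e.ι (st a)) + -(a - e.ι r) := by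
      rw [map_sub]; ring
    rw [this]
    exact h1.add' h.neg'
  have := eq_zero_of_infinitesimal_iota e h2
  linarith [sub_eq_zero.mp this]

lemma st_iota (hst : IsStandardPart e st) (r : ℝ) : st (e.ι r) = r := by
  apply st_unique e st hst ((e.toOfin r).2)
  show Infinitesimal (e.ι r - e.ι r)
  rw [sub_self]
  intro N hN
  rw [abs_zero]

  exact inv_nonneg.2 (Nat.cast_nonneg N)

lemma st_add' (hst : IsStandardPart e st) {a b : R} (ha : a ∈ Ofin R) (hb : b ∈ Ofin R) :
    st (a + b) = st a + st b := by
  apply st_unique e st hst (Subring.add_mem _ ha hb)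
  have : a + b - e.ι (st a + st b) = (a - e.ι (st a)) + (b - e.ι (st b)) := by
    rw [map_add]; ring
  rw [this]
  exact (hst a ha).add' (hst b hb)

lemma st_mul' (hst : IsStandardPart e st) {a b : R} (ha : a ∈ Ofin R) (hb : b ∈ Ofin R) :
    st (a * b) = st a * st b := by
  apply st_unique e st hst (Subring.mul_mem _ ha hb)
  have key : a * b - e.ι (st a * st b) =
      (a - e.ι (st a)) * b + (b - e.ι (st b)) * e.ι (st a) := by
    rw [map_mul]; ring
  rw [key]
  exact ((hst a ha).mul_fin hb).add' ((hst b hb).mul_fin ((e.toOfin (st a)).2))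

end StPart

section PolyLemmas

variable {R : Type} [Field R] [LinearOrder R] [IsStrictOrderedRing R] {n : ℕ} (x : Fin n → Ofin R)

lemma eval_zero_of_mem {p : MvPolynomial (Fin n) (Ofin R)} (hp : p ∈ idealAt x) :
    eval x p = 0 := by
  have hle : idealAt x ≤ RingHom.ker (eval x) := by
    rw [idealAt, Ideal.span_le]
    rintro _ ⟨i, rfl⟩
    simp [RingHom.mem_ker]
  exact hle hp

lemma sub_C_eval_mem (q : MvPolynomial (Fin n) (Ofin R)) :
    q - C (eval x q) ∈ idealAt x := by
  induction q using MvPolynomial.induction_on with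
  | C a => simp
  | add p q hp hq =>
      have : p + q - C (eval x (p + q)) = (p - C (eval x p)) + (q - C (eval x q)) := by
        rw [map_add, map_add]; ring
      rw [this]; exact Ideal.add_mem _ hp hq
  | mul_X p i hp =>
      have : p * X i - C (eval x (p * X i)) =
          p * (X i - C (x i)) + C (x i) * (p - C (eval x p)) := by
        rw [map_mul, eval_X, map_mul]; ring
      rw [this]
      refine Ideal.add_mem _ ?_ (Ideal.mul_mem_left _ _ hp)
      exact Ideal.mul_mem_left _ _ (Ideal.subset_span ⟨i, rfl⟩)

lemma pderiv_mem_of_sq {p : MvPolynomial (Fin n) (Ofin R)} (hp : p ∈ (idealAt x) ^ 2)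
    (c : Fin n) : pderiv c p ∈ idealAt x := by
  rw [pow_two] at hp
  refine Submodule.mul_induction_on hp (fun m hm q hq => ?_) (fun a b ha hb => ?_)
  · rw [pderiv_mul]
    exact Ideal.add_mem _ (Ideal.mul_mem_left _ _ hq) (Ideal.mul_mem_right _ _ hm)
  · rw [map_add]; exact Ideal.add_mem _ ha hb

lemma hess_eval_zero_of_cube {p : MvPolynomial (Fin n) (Ofin R)}
    (hp : p ∈ (idealAt x) ^ 3) (a b : Fin n) :
    eval x (pderiv a (pderiv b p)) = 0 := by
  have h3 : (idealAt x) ^ 3 = (idealAt x) ^ 2 * idealAt x := by rw [pow_succ]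
  rw [h3] at hp
  refine Submodule.mul_induction_on hp (fun m hm q hq => ?_) (fun u v hu hv => ?_)
  · have hq0 : eval x q = 0 := eval_zero_of_mem x hq
    have hm0 : eval x m = 0 := eval_zero_of_mem x (Ideal.pow_le_self two_ne_zero hm)
    have hmb : eval x (pderiv b m) = 0 := eval_zero_of_mem x (pderiv_mem_of_sq x hm b)
    have hma : eval x (pderiv a m) = 0 := eval_zero_of_mem x (pderiv_mem_of_sq x hm a)
    rw [pderiv_mul, map_add, pderiv_mul, pderiv_mul]
    simp [hq0, hm0, hmb, hma]
  · rw [map_add, map_add, map_add, hu, hv, add_zero]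

lemma quad_decomp {p : MvPolynomial (Fin n) (Ofin R)} (hp : p ∈ (idealAt x) ^ 2) :
    ∃ c : Fin n → Fin n → Ofin R,
      p - (∑ a, ∑ b, C (c a b) * ((X a - C (x a)) * (X b - C (x b)))) ∈ (idealAt x) ^ 3 := by
  rw [pow_two] at hp
  refine Submodule.mul_induction_on hp (fun m hm q hq => ?_) (fun u v hu hv => ?_)
  · rw [idealAt, Ideal.mem_span_range_iff_exists_fun] at hm hq
    obtain ⟨f, hf⟩ := hm
    obtain ⟨h, hh⟩ := hq
    refine ⟨fun a b => eval x (f a * h b), ?_⟩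
    have hexp : m * q = ∑ a, ∑ b, (f a * h b) * ((X a - C (x a)) * (X b - C (x b))) := by
      rw [← hf, ← hh, Finset.sum_mul_sum]
      refine Finset.sum_congr rfl fun a _ => Finset.sum_congr rfl fun b _ => by ring
    rw [hexp, ← Finset.sum_sub_distrib]
    refine Ideal.sum_mem _ fun a _ => ?_
    rw [← Finset.sum_sub_distrib]
    refine Ideal.sum_mem _ fun b _ => ?_
    have : f a * h b * ((X a - C (x a)) * (X b - C (x b))) -
        C (eval x (f a * h b)) * ((X a - C (x a)) * (X b - C (x b))) =
        ((X a - C (x a)) * (X b - C (x b))) * (f a * h b - C (eval x (f a * h b))) := by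
      ring
    rw [this]
    have h3 : (idealAt x) ^ 3 = (idealAt x) ^ 2 * idealAt x := by rw [pow_succ]
    rw [h3]
    refine Ideal.mul_mem_mul ?_ (sub_C_eval_mem x _)
    rw [pow_two]
    exact Ideal.mul_mem_mul (Ideal.subset_span ⟨a, rfl⟩) (Ideal.subset_span ⟨b, rfl⟩)
  · obtain ⟨c1, hc1⟩ := hu
    obtain ⟨c2, hc2⟩ := hv
    refine ⟨fun a b => c1 a b + c2 a b, ?_⟩
    have hsplit : (∑ a, ∑ b, C (c1 a b + c2 a b) * ((X a - C (x a)) * (X b - C (x b)))) =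
        (∑ a, ∑ b, C (c1 a b) * ((X a - C (x a)) * (X b - C (x b)))) +
        (∑ a, ∑ b, C (c2 a b) * ((X a - C (x a)) * (X b - C (x b)))) := by
      rw [← Finset.sum_add_distrib]
      refine Finset.sum_congr rfl fun a _ => ?_
      rw [← Finset.sum_add_distrib]
      refine Finset.sum_congr rfl fun b _ => ?_
      rw [map_add]; ring
    have : u + v - (∑ a, ∑ b, C (c1 a b + c2 a b) * ((X a - C (x a)) * (X b - C (x b)))) =
        (u - ∑ a, ∑ b, C (c1 a b) * ((X a - C (x a)) * (X b - C (x b)))) +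
        (v - ∑ a, ∑ b, C (c2 a b) * ((X a - C (x a)) * (X b - C (x b)))) := by
      rw [hsplit]; ring
    rw [this]
    exact Ideal.add_mem _ hc1 hc2

end PolyLemmas

section HessLemmas

variable {R : Type} [Field R] [LinearOrder R] [IsStrictOrderedRing R] {n : ℕ} (x : Fin n → Ofin R)

lemma hess_basis (c : Ofin R) (i j a b : Fin n) :
    eval x (pderiv a (pderiv b (C c * ((X i - C (x i)) * (X j - C (x j)))))) =
      c * ((if i = b then 1 else 0) * (if j = a then 1 else 0) +
           (if i = a then 1 else 0) * (if j = b then 1 else 0)) := by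
  classical
  have hd : ∀ (u v : Fin n),
      pderiv u (X v - C (x v) : MvPolynomial (Fin n) (Ofin R)) =
        C (if v = u then 1 else 0) := by
    intro u v
    rw [map_sub, pderiv_X, pderiv_C, sub_zero, Pi.single_apply]
    split <;> simp
  have hg : ∀ v, eval x (X v - C (x v) : MvPolynomial (Fin n) (Ofin R)) = 0 := by
    intro v; simp
  simp only [pderiv_C_mul, pderiv_mul, hd, pderiv_C, map_add, map_mul, eval_C, hg,
    mul_zero, zero_mul, add_zero, zero_add]

lemma hess_of_decomp {p : MvPolynomial (Fin n) (Ofin R)} (c : Fin n → Fin n → Ofin R)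
    (hr : p - (∑ a, ∑ b, C (c a b) * ((X a - C (x a)) * (X b - C (x b)))) ∈ (idealAt x) ^ 3)
    (a b : Fin n) :
    eval x (pderiv a (pderiv b p)) = c a b + c b a := by
  classical
  have hsplit : p = (∑ i, ∑ j, C (c i j) * ((X i - C (x i)) * (X j - C (x j)))) +
      (p - ∑ i, ∑ j, C (c i j) * ((X i - C (x i)) * (X j - C (x j)))) := by ring
  rw [hsplit, map_add, map_add, map_add, hess_eval_zero_of_cube x hr a b, add_zero,
    map_sum, map_sum, map_sum]
  simp only [map_sum, hess_basis x]
  simp only [mul_add, mul_ite, ite_mul, mul_zero, zero_mul, mul_one, one_mul,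
    Finset.sum_add_distrib, Finset.sum_ite_eq, Finset.sum_ite_eq', Finset.mem_univ, if_true]
  exact add_comm _ _

end HessLemmas

section MoreHelpers

variable {R : Type} [Field R] [LinearOrder R] [IsStrictOrderedRing R]

lemma sqrt_small (e : RealClosedExt R) (a : Ofin R) (h0 : (0:R) ≤ (a : R))
    (h4 : (a : R) ≤ 4) : ∃ b : Ofin R, b * b = a := by
  obtain ⟨b0, hb0⟩ := e.sq (a : R) h0
  have hb0' : b0 * b0 = (a : R) := by rw [← hb0]; ring
  have habs : |b0| ≤ ((2 : ℕ) : R) := by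
    have hcast : ((2 : ℕ) : R) = 2 := by norm_num
    rw [hcast, abs_le]
    constructor <;> nlinarith
  exact ⟨⟨b0, ⟨2, habs⟩⟩, Subtype.ext hb0'⟩

lemma real_eq_zero_of_abs_le {K v : ℝ} (hK : 0 ≤ K)
    (h : ∀ N : ℕ, 0 < N → |v| ≤ K / N) : v = 0 := by
  by_contra hv
  have hvpos : 0 < |v| := abs_pos.2 hv
  obtain ⟨N, hN⟩ := exists_nat_gt (K / |v|)
  have hNpos : 0 < N := by
    have : (0:ℝ) < N := lt_of_le_of_lt (div_nonneg hK hvpos.le) hN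
    exact_mod_cast this
  have hNR : (0:ℝ) < N := by exact_mod_cast hNpos
  have h1 := h N hNpos
  have h2 : K < N * |v| := by
    rw [div_lt_iff₀ hvpos] at hN; linarith
  rw [le_div_iff₀ hNR] at h1
  nlinarith

lemma phi_finsum {A : Type} [CommRing A] (φ : A → ℝ) (J : Ideal A)
    (hadd : ∀ p ∈ J, ∀ q ∈ J, φ (p + q) = φ p + φ q) (h0 : φ 0 = 0)
    {ι : Type} [DecidableEq ι] (s : Finset ι) (f : ι → A) (hf : ∀ i ∈ s, f i ∈ J) :
    φ (∑ i ∈ s, f i) = ∑ i ∈ s, φ (f i) := by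
  induction s using Finset.induction_on with
  | empty => simpa using h0
  | @insert a s' hx ih =>
      rw [Finset.sum_insert hx, Finset.sum_insert hx,
        hadd _ (hf a (Finset.mem_insert_self a s')) _
          (Ideal.sum_mem _ fun i hi => hf i (Finset.mem_insert_of_mem hi)),
        ih fun i hi => hf i (Finset.mem_insert_of_mem hi)]

lemma st_finsum (e : RealClosedExt R) (st : R → ℝ) (hst : IsStandardPart e st)
    {ι : Type} [DecidableEq ι] (s : Finset ι) (f : ι → R) (hf : ∀ i ∈ s, f i ∈ Ofin R) :
    st (∑ i ∈ s, f i) = ∑ i ∈ s, st (f i) := by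
  induction s using Finset.induction_on with
  | empty =>
      simp only [Finset.sum_empty]
      have := st_iota e st hst 0
      rwa [map_zero] at this
  | @insert a s' hx ih =>
      rw [Finset.sum_insert hx, Finset.sum_insert hx,
        st_add' e st hst (hf a (Finset.mem_insert_self a s'))
          (Subring.sum_mem _ fun i hi => hf i (Finset.mem_insert_of_mem hi)),
        ih fun i hi => hf i (Finset.mem_insert_of_mem hi)]

end MoreHelpers

theorem statement_3 {R : Type} [Field R] [LinearOrder R] [IsStrictOrderedRing R] (e : RealClosedExt R)
    (st : R → ℝ) (hst : IsStandardPart e st) {n : ℕ} (x : Fin n → Ofin R)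
    (φ : MvPolynomial (Fin n) (Ofin R) → ℝ)
    (hadd : ∀ p ∈ (idealAt x) ^ 2, ∀ q ∈ (idealAt x) ^ 2, φ (p + q) = φ p + φ q)
    (hsmul : ∀ r : ℝ, ∀ p ∈ (idealAt x) ^ 2, φ (C (e.toOfin r) * p) = r * φ p)
    (hpos : ∀ p ∈ (idealAt x) ^ 2, IsSOS p → 0 ≤ φ p)
    (hu : φ (uPolyO x) = 1)
    (hcube : ∀ p ∈ (idealAt x) ^ 3, φ p = 0) :
    ∃ v : Fin n → Fin n → ℝ, (∑ i, ∑ j, v i j ^ 2) = 1 ∧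
      ∀ p ∈ (idealAt x) ^ 2, φ p = (1 / 2) * st (∑ i, hessQuadO e p x (v i)) := by
  classical
  set I := idealAt x with hI
  set g : Fin n → MvPolynomial (Fin n) (Ofin R) := fun i => X i - C (x i) with hg
  have hgmem : ∀ i, g i ∈ I := fun i => Ideal.subset_span ⟨i, rfl⟩
  have hbasis : ∀ a b, g a * g b ∈ I ^ 2 := fun a b => by
    rw [pow_two]; exact Ideal.mul_mem_mul (hgmem a) (hgmem b)
  have hzero : φ 0 = 0 := by
    have h := hadd 0 (Ideal.zero_mem _) 0 (Ideal.zero_mem _)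
    rw [add_zero] at h; linarith
  have hsub : ∀ p ∈ I ^ 2, ∀ q ∈ I ^ 2, φ (p - q) = φ p - φ q := by
    intro p hp q hq
    have h := hadd q hq (p - q) (Ideal.sub_mem _ hp hq)
    rw [add_sub_cancel] at h; linarith
  -- single squares are SOS
  have hsq_sos : ∀ w : MvPolynomial (Fin n) (Ofin R), IsSOS (w ^ 2) := by
    intro w
    exact ⟨1, fun _ => w, by simp⟩
  -- killing infinitesimals against squares
  have hinf_sq : ∀ ε : Ofin R, Infinitesimal (ε : R) → ∀ q ∈ I, φ (C ε * q ^ 2) = 0 := by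
    intro ε hε q hq
    have hq2 : q ^ 2 ∈ I ^ 2 := Ideal.pow_mem_pow hq 2
    have hK0 : 0 ≤ φ (q ^ 2) := hpos _ hq2 (hsq_sos q)
    refine real_eq_zero_of_abs_le hK0 ?_
    intro N hN
    have hNR : (0:R) < (N : R) := by exact_mod_cast hN
    have hιN : e.ι ((N:ℝ))⁻¹ = ((N:R))⁻¹ := by rw [map_inv₀, map_natCast]
    have hεle := hε N hN
    have hε1 := hε 1 Nat.one_pos
    have hb1 : |(ε:R)| ≤ 1 := by
      rw [Nat.cast_one, inv_one] at hε1; exact hε1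
    have habs1 : -(1:R) ≤ (ε:R) ∧ (ε:R) ≤ 1 := abs_le.mp hb1
    have hNinv1 : ((N:R))⁻¹ ≤ 1 := by
      rw [inv_le_one_iff₀]
      right; exact_mod_cast hN
    -- two nonneg combinations
    have key : ∀ ε' : Ofin R, (0:R) ≤ (ε' : R) → ((ε' : R)) ≤ 4 → 0 ≤ φ (C ε' * q ^ 2) := by
      intro ε' h0 h4
      obtain ⟨b, hb⟩ := sqrt_small e ε' h0 h4
      have hfact : C ε' * q ^ 2 = (C b * q) ^ 2 := by
        rw [← hb, map_mul]; ring
      rw [hfact]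
      exact hpos _ (by rw [← hfact]; exact Ideal.mul_mem_left _ _ hq2) (hsq_sos _)
    have hεabs := abs_le.mp hεle
    have h1 : 0 ≤ φ (C (e.toOfin ((N:ℝ))⁻¹ - ε) * q ^ 2) := by
      refine key _ ?_ ?_
      · show (0:R) ≤ e.ι ((N:ℝ))⁻¹ - (ε : R)
        rw [hιN]; linarith [hεabs.2]
      · show e.ι ((N:ℝ))⁻¹ - (ε : R) ≤ 4
        rw [hιN]; linarith [habs1.1]
    have h2 : 0 ≤ φ (C (e.toOfin ((N:ℝ))⁻¹ + ε) * q ^ 2) := by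
      refine key _ ?_ ?_
      · show (0:R) ≤ e.ι ((N:ℝ))⁻¹ + (ε : R)
        rw [hιN]; linarith [hεabs.1]
      · show e.ι ((N:ℝ))⁻¹ + (ε : R) ≤ 4
        rw [hιN]; linarith [habs1.2]
    have hCmem : ∀ c : Ofin R, C c * q ^ 2 ∈ I ^ 2 := fun c => Ideal.mul_mem_left _ _ hq2
    have hsplit1 : φ (C (e.toOfin ((N:ℝ))⁻¹ - ε) * q ^ 2) =
        ((N:ℝ))⁻¹ * φ (q ^ 2) - φ (C ε * q ^ 2) := by
      have : C (e.toOfin ((N:ℝ))⁻¹ - ε) * q ^ 2 =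
          C (e.toOfin ((N:ℝ))⁻¹) * q ^ 2 - C ε * q ^ 2 := by
        rw [map_sub]; ring
      rw [this, hsub _ (hCmem _) _ (hCmem _), hsmul _ _ hq2]
    have hsplit2 : φ (C (e.toOfin ((N:ℝ))⁻¹ + ε) * q ^ 2) =
        ((N:ℝ))⁻¹ * φ (q ^ 2) + φ (C ε * q ^ 2) := by
      have : C (e.toOfin ((N:ℝ))⁻¹ + ε) * q ^ 2 =
          C (e.toOfin ((N:ℝ))⁻¹) * q ^ 2 + C ε * q ^ 2 := by
        rw [map_add]; ring
      rw [this, hadd _ (hCmem _) _ (hCmem _), hsmul _ _ hq2]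
    rw [hsplit1] at h1
    rw [hsplit2] at h2
    have hKN : φ (q ^ 2) / (N:ℝ) = ((N:ℝ))⁻¹ * φ (q ^ 2) := by ring
    rw [abs_le, hKN]
    constructor <;> linarith
  -- φ kills infinitesimal multiples of basis quadratics
  have hinf_basis : ∀ ε : Ofin R, Infinitesimal (ε : R) → ∀ a b,
      φ (C ε * (g a * g b)) = 0 := by
    intro ε hε a b
    have hq4 : (e.toOfin (4:ℝ)⁻¹ : Ofin R) * 4 = 1 := by
      apply Subtype.ext
      show e.ι (4:ℝ)⁻¹ * (4:R) = 1
      have h4 : ((4:R)) = e.ι (4:ℝ) := by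
        rw [map_ofNat]
      rw [h4, ← map_mul, inv_mul_cancel₀ (by norm_num : (4:ℝ) ≠ 0), map_one]
    have hpol : C ε * (g a * g b) =
        C (ε * e.toOfin (4:ℝ)⁻¹) * (g a + g b) ^ 2 -
        C (ε * e.toOfin (4:ℝ)⁻¹) * (g a - g b) ^ 2 := by
      rw [map_mul]
      have h4C : (C (e.toOfin (4:ℝ)⁻¹) : MvPolynomial (Fin n) (Ofin R)) * 4 = 1 := by
        rw [show ((4:MvPolynomial (Fin n) (Ofin R))) = C 4 from (map_ofNat C 4).symm,
          ← map_mul, hq4, map_one]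
      calc C ε * (g a * g b) = C ε * (C (e.toOfin (4:ℝ)⁻¹) * 4) * (g a * g b) := by
            rw [h4C, mul_one]
      _ = C ε * C (e.toOfin (4:ℝ)⁻¹) * (g a + g b) ^ 2 -
          C ε * C (e.toOfin (4:ℝ)⁻¹) * (g a - g b) ^ 2 := by ring
    have hε' : Infinitesimal ((ε * e.toOfin (4:ℝ)⁻¹ : Ofin R) : R) :=
      hε.mul_fin (e.toOfin (4:ℝ)⁻¹).2
    have hs : g a + g b ∈ I := Ideal.add_mem _ (hgmem a) (hgmem b)
    have hd : g a - g b ∈ I := Ideal.sub_mem _ (hgmem a) (hgmem b)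
    rw [hpol, hsub _ (Ideal.mul_mem_left _ _ (Ideal.pow_mem_pow hs 2))
        _ (Ideal.mul_mem_left _ _ (Ideal.pow_mem_pow hd 2)),
      hinf_sq _ hε' _ hs, hinf_sq _ hε' _ hd, sub_zero]
  -- φ (C c * basis) = st c * φ basis
  have hC_basis : ∀ (c : Ofin R) (a b : Fin n),
      φ (C c * (g a * g b)) = st (c : R) * φ (g a * g b) := by
    intro c a b
    set r := st (c : R) with hr
    have hεinf : Infinitesimal ((c - e.toOfin r : Ofin R) : R) := by
      have := hst (c : R) c.2
      exact this
    have hsplit : C c * (g a * g b) =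
        C (e.toOfin r) * (g a * g b) + C (c - e.toOfin r) * (g a * g b) := by
      rw [map_sub]; ring
    rw [hsplit, hadd _ (Ideal.mul_mem_left _ _ (hbasis a b))
        _ (Ideal.mul_mem_left _ _ (hbasis a b)),
      hsmul _ _ (hbasis a b), hinf_basis _ hεinf a b, add_zero]
  -- the PSD matrix
  set A : Matrix (Fin n) (Fin n) ℝ := Matrix.of (fun a b => φ (g a * g b)) with hA
  have hAapp : ∀ a b, A a b = φ (g a * g b) := fun a b => rfl
  have hAsym : ∀ a b, A a b = A b a := by
    intro a b; rw [hAapp, hAapp, mul_comm]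
  have hφsum := fun {ι : Type} [DecidableEq ι] (s : Finset ι) f hf =>
    phi_finsum φ (I ^ 2) hadd hzero (ι := ι) s f hf
  have hPSD : A.PosSemidef := by
    rw [Matrix.posSemidef_iff_dotProduct_mulVec]
    constructor
    · ext a b
      simp only [Matrix.conjTranspose_apply, star_trivial]
      exact hAsym b a
    · intro w
      set Q : MvPolynomial (Fin n) (Ofin R) := ∑ a, C (e.toOfin (w a)) * g a with hQ
      have hQmem : Q ∈ I := Ideal.sum_mem _ fun a _ => Ideal.mul_mem_left _ _ (hgmem a)
      have htermmem : ∀ a b, C (e.toOfin (w a)) * (C (e.toOfin (w b)) * (g a * g b)) ∈ I ^ 2 :=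
        fun a b => Ideal.mul_mem_left _ _ (Ideal.mul_mem_left _ _ (hbasis a b))
      have hQsq : Q ^ 2 = ∑ a, ∑ b,
          C (e.toOfin (w a)) * (C (e.toOfin (w b)) * (g a * g b)) := by
        rw [sq, hQ, Finset.sum_mul_sum]
        exact Finset.sum_congr rfl fun a _ => Finset.sum_congr rfl fun b _ => by ring
      have hφQ : φ (Q ^ 2) = ∑ a, ∑ b, w a * (w b * φ (g a * g b)) := by
        rw [hQsq, hφsum _ _ (fun a _ => Ideal.sum_mem _ fun b _ => htermmem a b)]
        refine Finset.sum_congr rfl fun a _ => ?_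
        rw [hφsum _ _ (fun b _ => htermmem a b)]
        refine Finset.sum_congr rfl fun b _ => ?_
        rw [hsmul _ _ (Ideal.mul_mem_left _ _ (hbasis a b)), hsmul _ _ (hbasis a b)]
      have hdot : dotProduct (star w) (A.mulVec w) =
          ∑ a, ∑ b, w a * (w b * φ (g a * g b)) := by
        simp only [star_trivial, dotProduct, Matrix.mulVec, hAapp, Finset.mul_sum]
        refine Finset.sum_congr rfl fun a _ => Finset.sum_congr rfl fun b _ => by ring
      rw [hdot, ← hφQ]
      exact hpos _ (Ideal.pow_mem_pow hQmem 2) (hsq_sos Q)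
  -- trace is 1
  have htrace : ∑ j, A j j = 1 := by
    have huP : uPolyO x = ∑ j, g j * g j := by
      rw [uPolyO]
      exact Finset.sum_congr rfl fun j _ => by rw [sq]
    have hs := hφsum Finset.univ (fun j => g j * g j) (fun j _ => hbasis j j)
    calc ∑ j, A j j = ∑ j, φ (g j * g j) := Finset.sum_congr rfl fun j _ => hAapp j j
    _ = φ (∑ j, g j * g j) := hs.symm
    _ = φ (uPolyO x) := by rw [← huP]
    _ = 1 := hu
  -- square root of A
  open scoped MatrixOrder in
  set B := CFC.sqrt A with hB
  have hBmul : B * B = A := by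
    open scoped MatrixOrder in
    exact CFC.sqrt_mul_sqrt_self A hPSD.nonneg
  have hBH : B.IsHermitian := by
    open scoped MatrixOrder in
    exact (Matrix.nonneg_iff_posSemidef.mp (CFC.sqrt_nonneg A)).1
  have hBsym : ∀ i j, B i j = B j i := by
    intro i j
    have := hBH.apply j i
    simpa using this
  have hvA : ∀ a b, (∑ i, B i a * B i b) = A a b := by
    intro a b
    calc (∑ i, B i a * B i b) = ∑ i, B a i * B i b :=
          Finset.sum_congr rfl fun i _ => by rw [hBsym i a]
    _ = (B * B) a b := (Matrix.mul_apply).symm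
    _ = A a b := by rw [hBmul]
  refine ⟨fun i j => B i j, ?_, ?_⟩
  · -- normalization
    calc (∑ i, ∑ j, B i j ^ 2) = ∑ j, ∑ i, B i j * B i j := by
          rw [Finset.sum_comm]
          exact Finset.sum_congr rfl fun j _ => Finset.sum_congr rfl fun i _ => pow_two (B i j)
    _ = ∑ j, A j j := Finset.sum_congr rfl fun j _ => hvA j j
    _ = 1 := htrace
  · -- the formula
    intro p hp
    obtain ⟨c, hr⟩ := quad_decomp x hp
    have hrg : p - (∑ a, ∑ b, C (c a b) * (g a * g b)) ∈ I ^ 3 := hr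
    have hSmem : (∑ a, ∑ b, C (c a b) * (g a * g b)) ∈ I ^ 2 :=
      Ideal.sum_mem _ fun a _ => Ideal.sum_mem _ fun b _ => Ideal.mul_mem_left _ _ (hbasis a b)
    have h32 : I ^ 3 ≤ I ^ 2 := by rw [pow_succ]; exact Ideal.mul_le_left (I := I ^ 2) (J := I)
    have hrmem2 : p - (∑ a, ∑ b, C (c a b) * (g a * g b)) ∈ I ^ 2 := h32 hrg
    have hφp : φ p = ∑ a, ∑ b, st ((c a b : R)) * φ (g a * g b) := by
      have h1 : φ p = φ (∑ a, ∑ b, C (c a b) * (g a * g b)) +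
          φ (p - (∑ a, ∑ b, C (c a b) * (g a * g b))) := by
        have h := hadd _ hSmem _ hrmem2
        rw [add_sub_cancel] at h; exact h
      rw [h1, hcube _ hrg, add_zero,
        hφsum _ _ (fun a _ => Ideal.sum_mem _ fun b _ => Ideal.mul_mem_left _ _ (hbasis a b))]
      refine Finset.sum_congr rfl fun a _ => ?_
      rw [hφsum _ _ (fun b _ => Ideal.mul_mem_left _ _ (hbasis a b))]
      exact Finset.sum_congr rfl fun b _ => hC_basis (c a b) a b
    have hH : ∀ a b, eval x (pderiv a (pderiv b p)) = c a b + c b a :=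
      fun a b => hess_of_decomp x c hr a b
    have hfinι : ∀ r : ℝ, e.ι r ∈ Ofin R := fun r => (e.toOfin r).2
    have hstH : ∀ a b : Fin n,
        st (((eval x (pderiv a (pderiv b p)) : Ofin R) : R)) =
          st ((c a b : R)) + st ((c b a : R)) := by
      intro a b
      rw [hH a b]
      push_cast
      exact st_add' e st hst (c a b).2 (c b a).2
    have hstQ : ∀ i, st (hessQuadO e p x (fun j => B i j)) =
        ∑ a, ∑ b, B i a * (st ((c a b : R)) + st ((c b a : R))) * B i b := by
      intro i
      rw [hessQuadO]
      rw [st_finsum e st hst _ _ (fun a _ => Subring.sum_mem _ fun b _ =>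
        Subring.mul_mem _ (Subring.mul_mem _ (hfinι _) (eval x (pderiv a (pderiv b p))).2)
          (hfinι _))]
      refine Finset.sum_congr rfl fun a _ => ?_
      rw [st_finsum e st hst _ _ (fun b _ =>
        Subring.mul_mem _ (Subring.mul_mem _ (hfinι _) (eval x (pderiv a (pderiv b p))).2)
          (hfinι _))]
      refine Finset.sum_congr rfl fun b _ => ?_
      rw [st_mul' e st hst
          (Subring.mul_mem _ (hfinι _) (eval x (pderiv a (pderiv b p))).2) (hfinι _),
        st_mul' e st hst (hfinι _) (eval x (pderiv a (pderiv b p))).2,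
        st_iota e st hst, st_iota e st hst, hstH a b]
    have h1 : st (∑ i, hessQuadO e p x (fun j => B i j)) =
        ∑ i, ∑ a, ∑ b, B i a * (st ((c a b : R)) + st ((c b a : R))) * B i b := by
      rw [st_finsum e st hst _ _ (fun i _ => by
        rw [hessQuadO]
        exact Subring.sum_mem _ fun a _ => Subring.sum_mem _ fun b _ =>
          Subring.mul_mem _ (Subring.mul_mem _ (hfinι _)
            (eval x (pderiv a (pderiv b p))).2) (hfinι _))]
      exact Finset.sum_congr rfl fun i _ => hstQ i
    have h2 : (∑ i, ∑ a, ∑ b, B i a * (st ((c a b : R)) + st ((c b a : R))) * B i b)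
        = ∑ a, ∑ b, (st ((c a b : R)) + st ((c b a : R))) * A a b := by
      rw [Finset.sum_comm]
      refine Finset.sum_congr rfl fun a _ => ?_
      rw [Finset.sum_comm]
      refine Finset.sum_congr rfl fun b _ => ?_
      rw [← hvA a b, Finset.mul_sum]
      exact Finset.sum_congr rfl fun i _ => by ring
    have h3 : (∑ a, ∑ b, (st ((c a b : R)) + st ((c b a : R))) * A a b)
        = 2 * ∑ a, ∑ b, st ((c a b : R)) * φ (g a * g b) := by
      have hswap : (∑ a, ∑ b, st ((c b a : R)) * A a b)
          = ∑ a, ∑ b, st ((c a b : R)) * A a b := by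
        rw [Finset.sum_comm]
        exact Finset.sum_congr rfl fun a _ => Finset.sum_congr rfl fun b _ => by
          rw [hAsym b a]
      have hAphi : (∑ a, ∑ b, st ((c a b : R)) * A a b)
          = ∑ a, ∑ b, st ((c a b : R)) * φ (g a * g b) :=
        Finset.sum_congr rfl fun a _ => Finset.sum_congr rfl fun b _ => by rw [hAapp]
      simp only [add_mul, Finset.sum_add_distrib, hswap, hAphi]
      ring
    show φ p = 1 / 2 * st (∑ i, hessQuadO e p x (fun j => B i j))
    rw [hφp, h1, h2, h3]
    ring
end

section
/- Let R be a real closed extension field of ℝ and let Φ : 𝒪_R[X₁,…,Xₙ] → ℝ be a ring homomorphism. Then there exists x ∈ ℝⁿ such that Φ(p) = st(p(x)) for all p ∈ 𝒪_R[X₁,…,Xₙ]. -/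
set_option maxHeartbeats 1000000
set_option synthInstance.maxHeartbeats 400000


open MvPolynomial Finset

section Aux
variable {R : Type} [Field R] [LinearOrder R] [IsStrictOrderedRing R]

lemma phi_nonneg {n : ℕ} (e : RealClosedExt R)
    (Φ : MvPolynomial (Fin n) (Ofin R) →+* ℝ) (a : Ofin R) (ha : (0:R) ≤ (a:R)) :
    0 ≤ Φ (C a) := by
  obtain ⟨b, hb⟩ := e.sq (a : R) ha
  obtain ⟨N, hN⟩ := a.2
  have hbO : b ∈ Ofin R := by
    refine ⟨N + 1, ?_⟩
    push_cast
    by_contra h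
    push_neg at h
    have h0 : (0:R) ≤ (N:R) := Nat.cast_nonneg N
    have habs : |(a:R)| = (a:R) := abs_of_nonneg ha
    nlinarith [sq_abs b, abs_nonneg b]
  have : (C a : MvPolynomial (Fin n) (Ofin R)) = (C (⟨b, hbO⟩ : Ofin R)) ^ 2 := by
    rw [← map_pow]
    congr 1
    exact Subtype.ext hb.symm
  rw [this, map_pow]
  positivity

lemma phi_real {n : ℕ} (e : RealClosedExt R)
    (Φ : MvPolynomial (Fin n) (Ofin R) →+* ℝ) (r : ℝ) :
    Φ (C (e.toOfin r)) = r := by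
  have : Φ.comp ((C : Ofin R →+* MvPolynomial (Fin n) (Ofin R)).comp e.toOfin)
      = RingHom.id ℝ := Subsingleton.elim _ _
  exact congrFun (congrArg DFunLike.coe this) r

lemma phi_infinitesimal {n : ℕ} (e : RealClosedExt R)
    (Φ : MvPolynomial (Fin n) (Ofin R) →+* ℝ) (a : Ofin R)
    (ha : Infinitesimal (a : R)) : Φ (C a) = 0 := by
  have key : ∀ N : ℕ, 0 < N → |Φ (C a)| ≤ (N : ℝ)⁻¹ := by
    intro N hN
    have hNR : (0:R) < (N : R) := Nat.cast_pos.mpr hN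
    have hinv : (N:R) * (N:R)⁻¹ = 1 := mul_inv_cancel₀ hNR.ne'
    have hm := ha N hN
    rw [abs_le] at hm
    have h1 : 0 ≤ Φ (C ((1 : Ofin R) + (N : Ofin R) * a)) := by
      apply phi_nonneg e Φ
      push_cast
      nlinarith [hm.1]
    have h2 : 0 ≤ Φ (C ((1 : Ofin R) - (N : Ofin R) * a)) := by
      apply phi_nonneg e Φ
      push_cast
      nlinarith [hm.2]
    have e1 : Φ (C ((1 : Ofin R) + (N : Ofin R) * a)) = 1 + N * Φ (C a) := by
      rw [C_add, C_mul, C_1, map_natCast (C : Ofin R →+* MvPolynomial (Fin n) (Ofin R)),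
        map_add Φ, map_mul Φ, map_one Φ, map_natCast Φ]
    have e2 : Φ (C ((1 : Ofin R) - (N : Ofin R) * a)) = 1 - N * Φ (C a) := by
      rw [C_sub, C_mul, C_1, map_natCast (C : Ofin R →+* MvPolynomial (Fin n) (Ofin R)),
        map_sub Φ, map_mul Φ, map_one Φ, map_natCast Φ]
    rw [e1] at h1; rw [e2] at h2
    rw [abs_le]
    have hNR' : (0:ℝ) < (N : ℝ) := Nat.cast_pos.mpr hN
    have hinvR : (N:ℝ) * (N:ℝ)⁻¹ = 1 := mul_inv_cancel₀ hNR'.ne'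
    have hinvpos : (0:ℝ) < (N:ℝ)⁻¹ := inv_pos.mpr hNR'
    constructor
    · nlinarith
    · nlinarith
  by_contra h
  obtain ⟨N, hN⟩ := exists_nat_one_div_lt (abs_pos.mpr h)
  have := key (N + 1) (Nat.succ_pos N)
  rw [one_div] at hN
  push_cast at hN this
  linarith

lemma phi_const {n : ℕ} (e : RealClosedExt R) (st : R → ℝ) (hst : IsStandardPart e st)
    (Φ : MvPolynomial (Fin n) (Ofin R) →+* ℝ) (a : Ofin R) :
    Φ (C a) = st (a : R) := by
  have hmem : (a : R) ∈ Ofin R := a.2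
  have hinf : Infinitesimal ((a - e.toOfin (st (a:R)) : Ofin R) : R) := by
    have : ((a - e.toOfin (st (a:R)) : Ofin R) : R) = (a : R) - e.ι (st (a:R)) := rfl
    rw [this]
    exact hst a hmem
  have := phi_infinitesimal e Φ _ hinf
  rw [C_sub, map_sub Φ] at this
  have hr := phi_real e Φ (st (a:R))
  linarith

end Aux

theorem statement_4 {R : Type} [Field R] [LinearOrder R] [IsStrictOrderedRing R] (e : RealClosedExt R)
    (st : R → ℝ) (hst : IsStandardPart e st) {n : ℕ}
    (Φ : MvPolynomial (Fin n) (Ofin R) →+* ℝ) :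
    ∃ x : Fin n → ℝ, ∀ p : MvPolynomial (Fin n) (Ofin R),
      Φ p = st (evalR (fun i => e.ι (x i)) p) := by
  set x : Fin n → ℝ := fun i => Φ (X i) with hx
  set y : Fin n → Ofin R := fun i => e.toOfin (x i) with hy
  refine ⟨x, fun p => ?_⟩
  have hcoe : evalR (fun i => e.ι (x i)) p = ((eval y p : Ofin R) : R) := by
    unfold evalR
    have h1 : ((eval y p : Ofin R) : R) = (Ofin R).subtype (eval y p) := rfl
    have h2 := MvPolynomial.eval₂_comp_left (Ofin R).subtype (RingHom.id (Ofin R)) y p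
    rw [h1, MvPolynomial.eval, coe_eval₂Hom, h2]
    congr 1
  rw [hcoe, ← phi_const e st hst Φ]
  have : Φ = Φ.comp ((C : Ofin R →+* MvPolynomial (Fin n) (Ofin R)).comp
      (eval y : MvPolynomial (Fin n) (Ofin R) →+* Ofin R)) := by
    apply MvPolynomial.ringHom_ext
    · intro a
      simp [eval_C]
    · intro i
      simp only [RingHom.comp_apply, RingHom.coe_comp, Function.comp_apply, eval_X]
      rw [phi_real e Φ (x i)]
  conv_lhs => rw [this]
  rfl
end

section
/- Let S ⊆ ℝⁿ be compact, let x₁,…,x_k ∈ ℝⁿ be pairwise distinct points in the interior of S, set u := u_{x₁}⋯u_{x_k} ∈ ℝ[X₁,…,Xₙ], and let f ∈ ℝ[X₁,…,Xₙ] satisfy f(x₁) = … = f(x_k) = 0. Then the following are equivalent: (a) f(x) > 0 for all x ∈ S∖{x₁,…,x_k} and the Hessian matrices (Hess f)(x₁),…,(Hess f)(x_k) are positive definite; (b) there exists ε > 0 such that f(x) ≥ ε·u(x) for all x ∈ S. -/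
open MvPolynomial Finset

noncomputable section AuxAll
open Polynomial Filter Topology

noncomputable section Aux
variable {n : ℕ}

def PhiA (x : Fin n → ℝ) : MvPolynomial (Fin n) ℝ →+* Polynomial (MvPolynomial (Fin n) ℝ) :=
  MvPolynomial.eval₂Hom (Polynomial.C.comp MvPolynomial.C)
    (fun i => Polynomial.C (MvPolynomial.C (x i)) + Polynomial.C (MvPolynomial.X i) * Polynomial.X)

def cfun (x : Fin n → ℝ) (p : MvPolynomial (Fin n) ℝ) (d : ℕ) (v : Fin n → ℝ) : ℝ :=
  MvPolynomial.eval v ((PhiA x p).coeff d)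

lemma coeff_zero_PhiA (x : Fin n → ℝ) (p : MvPolynomial (Fin n) ℝ) :
    (PhiA x p).coeff 0 = MvPolynomial.C (MvPolynomial.eval x p) := by
  rw [Polynomial.coeff_zero_eq_eval_zero]
  have : ((Polynomial.evalRingHom (0 : MvPolynomial (Fin n) ℝ)).comp (PhiA x)) p
      = (MvPolynomial.C.comp (MvPolynomial.eval x)) p := by
    apply RingHom.congr_fun
    apply MvPolynomial.ringHom_ext <;> intro r <;> simp [PhiA]
  simpa using this

lemma cfun_zero (x : Fin n → ℝ) (p : MvPolynomial (Fin n) ℝ) (v : Fin n → ℝ) :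
    cfun x p 0 v = MvPolynomial.eval x p := by
  rw [cfun, coeff_zero_PhiA]; simp

lemma derivative_PhiA (x : Fin n → ℝ) (p : MvPolynomial (Fin n) ℝ) :
    Polynomial.derivative (PhiA x p)
      = ∑ i, Polynomial.C (MvPolynomial.X i) * PhiA x (MvPolynomial.pderiv i p) := by
  induction p using MvPolynomial.induction_on with
  | C a => simp [PhiA]
  | add p q hp hq =>
      simp only [map_add, hp, hq, ← Finset.sum_add_distrib]
      exact Finset.sum_congr rfl fun i _ => (mul_add _ _ _).symm
  | mul_X p j hp =>
      have hXj : PhiA x (MvPolynomial.X j)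
          = Polynomial.C (MvPolynomial.C (x j)) + Polynomial.C (MvPolynomial.X j) * Polynomial.X := by
        simp [PhiA]
      have hderiv : Polynomial.derivative (PhiA x (MvPolynomial.X j))
          = Polynomial.C (MvPolynomial.X j) := by rw [hXj]; simp
      have hterm : ∀ i : Fin n, Polynomial.C (MvPolynomial.X i)
            * PhiA x (MvPolynomial.pderiv i (p * MvPolynomial.X j))
          = Polynomial.C (MvPolynomial.X i) * PhiA x (MvPolynomial.pderiv i p) * PhiA x (MvPolynomial.X j)
            + (if i = j then Polynomial.C (MvPolynomial.X j) * PhiA x p else 0) := by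
        intro i
        rw [MvPolynomial.pderiv_mul, map_add, map_mul, map_mul]
        by_cases h : i = j
        · subst h
          rw [MvPolynomial.pderiv_X_self, map_one, mul_one, if_pos rfl]
          ring
        · rw [MvPolynomial.pderiv_X_of_ne (Ne.symm h), map_zero, mul_zero, add_zero, if_neg h,
            add_zero]
          ring
      calc Polynomial.derivative (PhiA x (p * MvPolynomial.X j))
          = Polynomial.derivative (PhiA x p) * PhiA x (MvPolynomial.X j)
            + PhiA x p * Polynomial.C (MvPolynomial.X j) := by
            rw [map_mul, Polynomial.derivative_mul, hderiv]
        _ = (∑ i, Polynomial.C (MvPolynomial.X i) * PhiA x (MvPolynomial.pderiv i p))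
              * PhiA x (MvPolynomial.X j) + PhiA x p * Polynomial.C (MvPolynomial.X j) := by
            rw [hp]
        _ = ∑ i, Polynomial.C (MvPolynomial.X i)
              * PhiA x (MvPolynomial.pderiv i (p * MvPolynomial.X j)) := by
            rw [Finset.sum_congr rfl (fun i _ => hterm i), Finset.sum_add_distrib,
              Finset.sum_ite_eq' Finset.univ j, if_pos (Finset.mem_univ j), Finset.sum_mul]
            ring

lemma cfun_one (x : Fin n → ℝ) (p : MvPolynomial (Fin n) ℝ) (v : Fin n → ℝ) :
    cfun x p 1 v = gradDot p x v := by
  have h1 : (PhiA x p).coeff 1 = (Polynomial.derivative (PhiA x p)).coeff 0 := by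
    rw [Polynomial.coeff_derivative]; push_cast; ring
  rw [cfun, h1, derivative_PhiA]
  rw [Polynomial.finset_sum_coeff]
  simp only [Polynomial.coeff_C_mul, coeff_zero_PhiA]
  rw [map_sum]
  unfold gradDot
  refine Finset.sum_congr rfl fun i _ => ?_
  simp [mul_comm]

lemma cfun_two (x : Fin n → ℝ) (p : MvPolynomial (Fin n) ℝ) (v : Fin n → ℝ) :
    cfun x p 2 v = hessQuad p x v / 2 := by
  have h1 : (PhiA x p).coeff 2 * 2 = (Polynomial.derivative (PhiA x p)).coeff 1 := by
    rw [Polynomial.coeff_derivative]; push_cast; ring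
  have h2 : ∀ q : MvPolynomial (Fin n) ℝ, (PhiA x q).coeff 1
      = ∑ j, MvPolynomial.X j * MvPolynomial.C (MvPolynomial.eval x (MvPolynomial.pderiv j q)) := by
    intro q
    have hq : (PhiA x q).coeff 1 = (Polynomial.derivative (PhiA x q)).coeff 0 := by
      rw [Polynomial.coeff_derivative]; push_cast; ring
    rw [hq, derivative_PhiA, Polynomial.finset_sum_coeff]
    simp only [Polynomial.coeff_C_mul, coeff_zero_PhiA]
  have key : (PhiA x p).coeff 2 * 2 = ∑ i, ∑ j, MvPolynomial.X i * MvPolynomial.X j *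
      MvPolynomial.C (MvPolynomial.eval x (MvPolynomial.pderiv j (MvPolynomial.pderiv i p))) := by
    rw [h1, derivative_PhiA, Polynomial.finset_sum_coeff]
    simp only [Polynomial.coeff_C_mul, h2, Finset.mul_sum, mul_assoc]
  have := congrArg (MvPolynomial.eval v) key
  rw [map_mul, map_sum] at this
  simp only [map_sum, map_mul, MvPolynomial.eval_X, MvPolynomial.eval_C] at this
  have h3 : MvPolynomial.eval v ((2 : MvPolynomial (Fin n) ℝ)) = 2 := by simp
  rw [h3] at this
  unfold cfun hessQuad
  field_simp
  rw [this]
  rw [Finset.sum_comm]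
  refine Finset.sum_congr rfl fun b _ => Finset.sum_congr rfl fun a _ => by ring

end Aux
noncomputable section Aux2
variable {n : ℕ}

lemma sum_sq_nonneg (y z : Fin n → ℝ) : 0 ≤ ∑ i, (y i - z i)^2 :=
  Finset.sum_nonneg fun i _ => sq_nonneg _

lemma sum_sq_pos_of_ne {y z : Fin n → ℝ} (h : y ≠ z) : 0 < ∑ i, (y i - z i)^2 := by
  rcases lt_or_eq_of_le (sum_sq_nonneg y z) with h' | h'
  · exact h'
  · exfalso
    apply h
    funext i
    have := (Finset.sum_eq_zero_iff_of_nonneg (fun i _ => sq_nonneg (y i - z i))).mp h'.symm i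
      (Finset.mem_univ i)
    have : y i - z i = 0 := by
      have := sq_eq_zero_iff.mp this
      exact this
    linarith

lemma eval_at_zero (b : ℕ → ℝ) (N : ℕ) : ∑ e ∈ Finset.range (N+1), b e * (0:ℝ)^e = b 0 := by
  rw [Finset.sum_eq_single 0]
  · simp
  · intro e _ he
    rw [zero_pow he, mul_zero]
  · simp

lemma shift1 (c : ℕ → ℝ) (N : ℕ) (h0 : c 0 = 0) (hN : ∀ d, N < d → c d = 0) (t : ℝ) :
    ∑ d ∈ Finset.range (N+1), c d * t^d = t * ∑ e ∈ Finset.range (N+1), c (e+1) * t^e := by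
  have hext : ∑ d ∈ Finset.range (N+2), c d * t^d = ∑ d ∈ Finset.range (N+1), c d * t^d := by
    rw [Finset.sum_range_succ, hN (N+1) (Nat.lt_succ_self N), zero_mul, add_zero]
  rw [← hext, Finset.sum_range_succ' (fun d => c d * t^d) (N+1), h0, zero_mul, add_zero, Finset.mul_sum]
  refine Finset.sum_congr rfl fun e _ => by ring

lemma shift2 (c : ℕ → ℝ) (N : ℕ) (h0 : c 0 = 0) (h1 : c 1 = 0) (hN : ∀ d, N < d → c d = 0)
    (t : ℝ) :
    ∑ d ∈ Finset.range (N+1), c d * t^d = t^2 * ∑ e ∈ Finset.range (N+1), c (e+2) * t^e := by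
  rw [shift1 c N h0 hN t, shift1 (fun e => c (e+1)) N h1 (fun d hd => hN (d+1) (by omega)) t]
  ring

lemma split_head (b : ℕ → ℝ) (N : ℕ) (t : ℝ) :
    ∑ e ∈ Finset.range (N+1), b e * t^e = b 0 + t * ∑ e ∈ Finset.range N, b (e+1) * t^e := by
  rw [Finset.sum_range_succ' (fun e => b e * t^e) N, pow_zero, mul_one, add_comm,
    Finset.mul_sum]
  congr 1
  refine Finset.sum_congr rfl fun e _ => by ring

lemma g_continuous (c : ℕ → ℝ) (N : ℕ) :
    Continuous (fun t : ℝ => ∑ e ∈ Finset.range N, c e * t^e) :=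
  continuous_finset_sum _ fun e _ => continuous_const.mul (continuous_pow e)

end Aux2

section LemB
variable {n : ℕ}

lemma cfun_eq_zeroE (x : Fin n → ℝ) (p : MvPolynomial (Fin n) ℝ) {d : ℕ}
    (hd : (PhiA x p).natDegree < d) (v : Fin n → ℝ) : cfun x p d v = 0 := by
  unfold cfun
  rw [Polynomial.coeff_eq_zero_of_natDegree_lt hd, map_zero]

lemma eval_line (x : Fin n → ℝ) (p : MvPolynomial (Fin n) ℝ) (v : Fin n → ℝ) (t : ℝ) :
    MvPolynomial.eval (fun i => x i + v i * t) p
      = ∑ d ∈ Finset.range ((PhiA x p).natDegree + 1), cfun x p d v * t ^ d := by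
  have key : Polynomial.eval t ((PhiA x p).map (MvPolynomial.eval v))
      = MvPolynomial.eval (fun i => x i + v i * t) p := by
    have : ((Polynomial.evalRingHom t).comp ((Polynomial.mapRingHom (MvPolynomial.eval v)).comp
        (PhiA x))) p = (MvPolynomial.eval (fun i => x i + v i * t)) p := by
      apply RingHom.congr_fun
      apply MvPolynomial.ringHom_ext
      · intro r
        simp [PhiA]
      · intro i
        simp [PhiA]
    simpa using this
  rw [← key]
  rw [Polynomial.eval_eq_sum_range' (n := (PhiA x p).natDegree + 1)
    (lt_of_le_of_lt (Polynomial.natDegree_map_le) (Nat.lt_succ_self _))]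
  refine Finset.sum_congr rfl fun d _ => ?_
  rw [Polynomial.coeff_map]
  rfl

lemma lemB (x : Fin n → ℝ) (p : MvPolynomial (Fin n) ℝ) (h0 : MvPolynomial.eval x p = 0)
    {δ : ℝ} (hδ : 0 < δ)
    (hpos : ∀ y : Fin n → ℝ, (∑ i, (y i - x i)^2) < δ → 0 ≤ MvPolynomial.eval y p)
    (v : Fin n → ℝ) : gradDot p x v = 0 ∧ 0 ≤ hessQuad p x v := by
  set N := (PhiA x p).natDegree with hN
  set c : ℕ → ℝ := fun d => cfun x p d v with hc
  have hc0 : c 0 = 0 := by rw [hc]; simp only; rw [cfun_zero, h0]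
  have hcN : ∀ d, N < d → c d = 0 := fun d hd => cfun_eq_zeroE x p hd v
  set s := ∑ i, v i ^ 2 with hs
  by_cases hs0 : s = 0
  · have hv : ∀ i, v i = 0 := by
      intro i
      have h := (Finset.sum_eq_zero_iff_of_nonneg (fun i _ => sq_nonneg (v i))).mp
        (hs ▸ hs0) i (Finset.mem_univ i)
      exact sq_eq_zero_iff.mp h
    constructor
    · unfold gradDot; simp [hv]
    · unfold hessQuad; simp [hv]
  · have hspos : 0 < s := lt_of_le_of_ne (Finset.sum_nonneg fun i _ => sq_nonneg _) (Ne.symm hs0)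
    have key : ∀ t : ℝ, t^2 * s < δ → 0 ≤ ∑ d ∈ Finset.range (N+1), c d * t^d := by
      intro t ht
      have hsum : (∑ i, ((x i + v i * t) - x i)^2) = t^2 * s := by
        rw [hs, Finset.mul_sum]
        refine Finset.sum_congr rfl fun i _ => by ring
      have := hpos (fun i => x i + v i * t) (by rw [hsum]; exact ht)
      rwa [eval_line] at this
    set τ := Real.sqrt (δ / s) with hτ
    have hτpos : 0 < τ := Real.sqrt_pos.mpr (div_pos hδ hspos)
    have hlt : ∀ t : ℝ, |t| < τ → t^2 * s < δ := by
      intro t ht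
      have h1 : t^2 < δ / s := by
        have : |t|^2 < τ^2 := by
          apply pow_lt_pow_left₀ ht (abs_nonneg t)
          norm_num
        rwa [sq_abs, hτ, Real.sq_sqrt (le_of_lt (div_pos hδ hspos))] at this
      exact (lt_div_iff₀ hspos).mp h1
    -- first: c 1 = 0
    set g1 : ℝ → ℝ := fun t => ∑ e ∈ Finset.range (N+1), c (e+1) * t^e with hg1
    have hg1cont : Continuous g1 := g_continuous _ _
    have hg10 : g1 0 = c 1 := eval_at_zero _ _
    have hg1r : ∀ t : ℝ, 0 < t → t < τ → 0 ≤ g1 t := by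
      intro t h1 h2
      have := key t (hlt t (by rwa [abs_of_pos h1]))
      rw [shift1 c N hc0 hcN t] at this
      exact (mul_nonneg_iff_of_pos_left h1).mp this
    have hg1l : ∀ t : ℝ, -τ < t → t < 0 → g1 t ≤ 0 := by
      intro t h1 h2
      have := key t (hlt t (by rw [abs_of_neg h2]; linarith))
      rw [shift1 c N hc0 hcN t] at this
      by_contra hcon
      push_neg at hcon
      have := mul_neg_of_neg_of_pos h2 hcon
      linarith
    have hc1r : 0 ≤ c 1 := by
      rw [← hg10]
      refine ge_of_tendsto ((hg1cont.tendsto 0).mono_left nhdsWithin_le_nhds :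
        Tendsto g1 (𝓝[>] (0:ℝ)) (𝓝 (g1 0))) ?_
      filter_upwards [Ioo_mem_nhdsGT_of_mem (Set.mem_Ico.mpr ⟨le_refl (0:ℝ), hτpos⟩)]
        with t ht
      exact hg1r t ht.1 ht.2
    have hc1l : c 1 ≤ 0 := by
      rw [← hg10]
      refine le_of_tendsto ((hg1cont.tendsto 0).mono_left nhdsWithin_le_nhds :
        Tendsto g1 (𝓝[<] (0:ℝ)) (𝓝 (g1 0))) ?_
      filter_upwards [Ioo_mem_nhdsLT_of_mem (Set.mem_Ioc.mpr ⟨neg_lt_zero.mpr hτpos,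
        le_refl (0:ℝ)⟩)] with t ht
      exact hg1l t ht.1 ht.2
    have hc1 : c 1 = 0 := le_antisymm hc1l hc1r
    have hgrad : gradDot p x v = 0 := by
      have : c 1 = gradDot p x v := cfun_one x p v
      linarith
    refine ⟨hgrad, ?_⟩
    -- second: c 2 ≥ 0
    set g2 : ℝ → ℝ := fun t => ∑ e ∈ Finset.range (N+1), c (e+2) * t^e with hg2
    have hg2cont : Continuous g2 := g_continuous _ _
    have hg20 : g2 0 = c 2 := eval_at_zero _ _
    have hg2r : ∀ t : ℝ, 0 < t → t < τ → 0 ≤ g2 t := by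
      intro t h1 h2
      have := key t (hlt t (by rwa [abs_of_pos h1]))
      rw [shift2 c N hc0 hc1 hcN t] at this
      exact (mul_nonneg_iff_of_pos_left (pow_pos h1 2)).mp this
    have hc2 : 0 ≤ c 2 := by
      rw [← hg20]
      refine ge_of_tendsto ((hg2cont.tendsto 0).mono_left nhdsWithin_le_nhds :
        Tendsto g2 (𝓝[>] (0:ℝ)) (𝓝 (g2 0))) ?_
      filter_upwards [Ioo_mem_nhdsGT_of_mem (Set.mem_Ico.mpr ⟨le_refl (0:ℝ), hτpos⟩)]
        with t ht
      exact hg2r t ht.1 ht.2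
    have : c 2 = hessQuad p x v / 2 := cfun_two x p v
    linarith

end LemB

section LemC
variable {n : ℕ}

lemma cfun_continuous (x : Fin n → ℝ) (p : MvPolynomial (Fin n) ℝ) (d : ℕ) :
    Continuous (cfun x p d) := MvPolynomial.continuous_eval _

lemma lemC (x : Fin n → ℝ) (p : MvPolynomial (Fin n) ℝ) (h0 : MvPolynomial.eval x p = 0)
    (h1 : ∀ v, gradDot p x v = 0)
    (h2 : ∀ v : Fin n → ℝ, v ≠ 0 → 0 < hessQuad p x v) :
    ∃ c δ : ℝ, 0 < c ∧ 0 < δ ∧ ∀ y : Fin n → ℝ, (∑ i, (y i - x i)^2) < δ →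
      c * ∑ i, (y i - x i)^2 ≤ MvPolynomial.eval y p := by
  rcases Nat.eq_zero_or_pos n with hn | hn
  · subst hn
    refine ⟨1, 1, one_pos, one_pos, fun y _ => ?_⟩
    have hyx : y = x := Subsingleton.elim y x
    simp [hyx, h0]
  · set K : Set (Fin n → ℝ) := {v | ∑ i, v i ^ 2 = 1} with hK
    have hKclosed : IsClosed K := by
      have : K = (fun v : Fin n → ℝ => ∑ i, v i ^ 2) ⁻¹' {1} := rfl
      rw [this]
      exact IsClosed.preimage (continuous_finset_sum _ fun i _ => (continuous_apply i).pow 2)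
        isClosed_singleton
    have hKsub : K ⊆ Metric.closedBall 0 1 := by
      intro v hv
      rw [Metric.mem_closedBall]
      rw [dist_pi_le_iff zero_le_one]
      intro b
      simp only [Real.dist_eq, Pi.zero_apply, sub_zero]
      rw [← sq_le_one_iff_abs_le_one]
      calc v b ^ 2 ≤ ∑ i, v i ^ 2 :=
            Finset.single_le_sum (fun i _ => sq_nonneg (v i)) (Finset.mem_univ b)
        _ = 1 := hv
    have hKcomp : IsCompact K :=
      (isCompact_closedBall (0 : Fin n → ℝ) 1).of_isClosed_subset hKclosed hKsub
    have hKne : K.Nonempty := by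
      refine ⟨fun j => if j = ⟨0, hn⟩ then 1 else 0, ?_⟩
      rw [hK, Set.mem_setOf_eq]
      rw [Finset.sum_eq_single ⟨0, hn⟩]
      · simp
      · intro b _ hb; simp [hb]
      · intro h; exact absurd (Finset.mem_univ _) h
    -- minimum of cfun 2 on K
    obtain ⟨v₀, hv₀K, hmin⟩ := hKcomp.exists_isMinOn hKne (cfun_continuous x p 2).continuousOn
    set c₀ := cfun x p 2 v₀ with hc₀
    have hc₀pos : 0 < c₀ := by
      have hv₀ne : v₀ ≠ 0 := by
        intro h
        rw [hK] at hv₀K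
        simp only [Set.mem_setOf_eq, h] at hv₀K
        simp at hv₀K
      have := h2 v₀ hv₀ne
      rw [hc₀, cfun_two]
      linarith
    set N := (PhiA x p).natDegree with hNdef
    -- bounds on coefficients over K
    have hBex : ∀ d : ℕ, ∃ B : ℝ, 0 ≤ B ∧ ∀ v ∈ K, |cfun x p d v| ≤ B := by
      intro d
      obtain ⟨w, hwK, hw⟩ := hKcomp.exists_isMaxOn hKne (cfun_continuous x p d).abs.continuousOn
      exact ⟨|cfun x p d w|, abs_nonneg _, fun v hv => hw hv⟩
    choose B hB0 hBle using hBex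
    set M := ∑ e ∈ Finset.range (N+1), B (e+3) with hM
    have hM0 : 0 ≤ M := Finset.sum_nonneg fun e _ => hB0 _
    set τ := min 1 (c₀ / (2*(M+1))) with hτ
    have hτpos : 0 < τ := lt_min one_pos (div_pos hc₀pos (by linarith))
    have hτ1 : τ ≤ 1 := min_le_left _ _
    have claim : ∀ v ∈ K, ∀ t : ℝ, 0 < t → t < τ →
        (c₀/2) * t^2 ≤ MvPolynomial.eval (fun i => x i + v i * t) p := by
      intro v hvK t ht0 htτ
      rw [eval_line]
      set c : ℕ → ℝ := fun d => cfun x p d v with hc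
      have hc0 : c 0 = 0 := by rw [hc]; simp only; rw [cfun_zero, h0]
      have hc1 : c 1 = 0 := by rw [hc]; simp only; rw [cfun_one]; exact h1 v
      have hcN : ∀ d, N < d → c d = 0 := fun d hd => cfun_eq_zeroE x p hd v
      rw [shift2 c N hc0 hc1 hcN t]
      have hsplit : (∑ e ∈ Finset.range (N+1), c (e+2) * t^e)
          = c 2 + t * ∑ e ∈ Finset.range N, c (e+3) * t^e :=
        split_head (fun e => c (e+2)) N t
      have htail : |∑ e ∈ Finset.range N, c (e+3) * t^e| ≤ M := by
        calc |∑ e ∈ Finset.range N, c (e+3) * t^e|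
            ≤ ∑ e ∈ Finset.range N, |c (e+3) * t^e| := Finset.abs_sum_le_sum_abs _ _
          _ ≤ ∑ e ∈ Finset.range N, B (e+3) := by
              refine Finset.sum_le_sum fun e _ => ?_
              rw [abs_mul]
              have h1 : |c (e+3)| ≤ B (e+3) := hBle _ v hvK
              have h2 : |t^e| ≤ 1 := by
                rw [abs_pow, abs_of_pos ht0]
                exact pow_le_one₀ (le_of_lt ht0) (le_trans (le_of_lt htτ) hτ1)
              calc |c (e+3)| * |t^e| ≤ B (e+3) * 1 :=
                    mul_le_mul h1 h2 (abs_nonneg _) (hB0 _)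
                _ = B (e+3) := mul_one _
          _ ≤ M := Finset.sum_le_sum_of_subset_of_nonneg
                (Finset.range_subset_range.mpr (Nat.le_succ N)) (fun e _ _ => hB0 _)
      have hc2c₀ : c₀ ≤ c 2 := hmin hvK
      have hg2lb : c₀/2 ≤ ∑ e ∈ Finset.range (N+1), c (e+2) * t^e := by
        rw [hsplit]
        have h3 : t * ∑ e ∈ Finset.range N, c (e+3) * t^e ≥ -(c₀/2) := by
          have habs : |t * ∑ e ∈ Finset.range N, c (e+3) * t^e| ≤ t * M := by
            rw [abs_mul, abs_of_pos ht0]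
            exact mul_le_mul_of_nonneg_left htail (le_of_lt ht0)
          have htM : t * M ≤ c₀/2 := by
            have h4 : t ≤ c₀ / (2*(M+1)) := le_of_lt (lt_of_lt_of_le htτ (min_le_right _ _))
            calc t * M ≤ (c₀ / (2*(M+1))) * M :=
                  mul_le_mul_of_nonneg_right h4 hM0
              _ ≤ c₀/2 := by
                  rw [div_mul_eq_mul_div, div_le_div_iff₀ (by linarith) (by norm_num)]
                  nlinarith
          have := neg_abs_le (t * ∑ e ∈ Finset.range N, c (e+3) * t^e)
          linarith
        linarith
      calc (c₀/2) * t^2 = t^2 * (c₀/2) := by ring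
        _ ≤ t^2 * ∑ e ∈ Finset.range (N+1), c (e+2) * t^e :=
            mul_le_mul_of_nonneg_left hg2lb (sq_nonneg t)
    refine ⟨c₀/2, τ^2, by linarith, pow_pos hτpos 2, fun y hy => ?_⟩
    by_cases hyx : y = x
    · simp [hyx, h0]
    · set s := ∑ i, (y i - x i)^2 with hs
      have hspos : 0 < s := sum_sq_pos_of_ne hyx
      set t := Real.sqrt s with ht
      have ht0 : 0 < t := Real.sqrt_pos.mpr hspos
      have ht2 : t^2 = s := Real.sq_sqrt (le_of_lt hspos)
      have htτ : t < τ := by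
        have : t^2 < τ^2 := by rw [ht2]; exact hy
        nlinarith
      set v : Fin n → ℝ := fun i => (y i - x i) / t with hv
      have hvK : v ∈ K := by
        show (∑ i, ((y i - x i) / t) ^ 2) = 1
        have : ∀ i, ((y i - x i) / t) ^ 2 = (y i - x i)^2 / s := by
          intro i
          rw [div_pow, ht2]
        rw [Finset.sum_congr rfl fun i _ => this i, ← Finset.sum_div]
        exact div_self (ne_of_gt hspos)
      have hpoint : (fun i => x i + v i * t) = y := by
        funext i
        rw [hv]
        simp only
        rw [div_mul_cancel₀ _ (ne_of_gt ht0)]; ring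
      have := claim v hvK t ht0 htτ
      rw [hpoint] at this
      calc c₀/2 * s = c₀/2 * t^2 := by rw [ht2]
        _ ≤ MvPolynomial.eval y p := this

section UPoly
variable {n : ℕ}

lemma eval_uPolyE (y z : Fin n → ℝ) :
    MvPolynomial.eval y (uPoly z) = ∑ i, (y i - z i)^2 := by
  simp [uPoly]

lemma pderiv_uPoly (z : Fin n → ℝ) (b : Fin n) :
    MvPolynomial.pderiv b (uPoly z)
      = 2 * (MvPolynomial.X b - MvPolynomial.C (z b)) := by
  unfold uPoly
  rw [map_sum]
  have hterm : ∀ c : Fin n, MvPolynomial.pderiv b ((MvPolynomial.X c - MvPolynomial.C (z c))^2)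
      = if c = b then 2 * (MvPolynomial.X b - MvPolynomial.C (z b)) else 0 := by
    intro c
    rw [MvPolynomial.pderiv_pow, map_sub, MvPolynomial.pderiv_C, sub_zero]
    by_cases h : c = b
    · subst h
      rw [MvPolynomial.pderiv_X_self, if_pos rfl]
      push_cast
      ring
    · rw [MvPolynomial.pderiv_X_of_ne h, if_neg h, mul_zero]
  rw [Finset.sum_congr rfl fun c _ => hterm c, Finset.sum_ite_eq' Finset.univ b]
  simp

lemma eval_pderiv_uPoly (z : Fin n → ℝ) (b : Fin n) :
    MvPolynomial.eval z (MvPolynomial.pderiv b (uPoly z)) = 0 := by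
  rw [pderiv_uPoly]
  simp

lemma eval_pderiv2_uPoly (z y : Fin n → ℝ) (a b : Fin n) :
    MvPolynomial.eval y (MvPolynomial.pderiv a (MvPolynomial.pderiv b (uPoly z)))
      = if a = b then 2 else 0 := by
  rw [pderiv_uPoly]
  rw [MvPolynomial.pderiv_mul, map_sub, MvPolynomial.pderiv_C, sub_zero]
  by_cases h : a = b
  · subst h
    rw [MvPolynomial.pderiv_X_self, if_pos rfl]
    have : MvPolynomial.pderiv a (2 : MvPolynomial (Fin n) ℝ) = 0 := by
      have h2 : (2 : MvPolynomial (Fin n) ℝ) = MvPolynomial.C 2 := by push_cast; rfl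
      rw [h2, MvPolynomial.pderiv_C]
    rw [this]
    simp
  · rw [MvPolynomial.pderiv_X_of_ne (fun hh => h hh.symm), if_neg h]
    have : MvPolynomial.pderiv a (2 : MvPolynomial (Fin n) ℝ) = 0 := by
      have h2 : (2 : MvPolynomial (Fin n) ℝ) = MvPolynomial.C 2 := by push_cast; rfl
      rw [h2, MvPolynomial.pderiv_C]
    rw [this]
    simp

lemma hessQuad_sub_C_mul (f u : MvPolynomial (Fin n) ℝ) (ε : ℝ) (x v : Fin n → ℝ) :
    hessQuad (f - MvPolynomial.C ε * u) x v = hessQuad f x v - ε * hessQuad u x v := by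
  unfold hessQuad
  rw [Finset.mul_sum, ← Finset.sum_sub_distrib]
  refine Finset.sum_congr rfl fun a _ => ?_
  rw [Finset.mul_sum, ← Finset.sum_sub_distrib]
  refine Finset.sum_congr rfl fun b _ => ?_
  rw [map_sub, MvPolynomial.pderiv_C_mul, map_sub, MvPolynomial.pderiv_C_mul, map_sub, map_mul,
    MvPolynomial.eval_C]
  ring

lemma hessQuad_prodU {k : ℕ} (x : Fin k → Fin n → ℝ) (i : Fin k) (v : Fin n → ℝ) :
    hessQuad (∏ j, uPoly (x j)) (x i) v
      = 2 * (∏ j ∈ Finset.univ.erase i, ∑ c, (x i c - x j c)^2) * ∑ a, v a ^ 2 := by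
  set w : MvPolynomial (Fin n) ℝ := ∏ j ∈ Finset.univ.erase i, uPoly (x j) with hw
  have hprod : ∏ j, uPoly (x j) = uPoly (x i) * w :=
    (Finset.mul_prod_erase Finset.univ _ (Finset.mem_univ i)).symm
  have hW : MvPolynomial.eval (x i) w = ∏ j ∈ Finset.univ.erase i, ∑ c, (x i c - x j c)^2 := by
    rw [hw, map_prod]
    exact Finset.prod_congr rfl fun j _ => eval_uPolyE _ _
  have hu0 : MvPolynomial.eval (x i) (uPoly (x i)) = 0 := by
    rw [eval_uPolyE]
    simp
  have hE : ∀ a b : Fin n,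
      MvPolynomial.eval (x i) (MvPolynomial.pderiv a (MvPolynomial.pderiv b (uPoly (x i) * w)))
        = (if a = b then 2 else 0) * MvPolynomial.eval (x i) w := by
    intro a b
    simp only [MvPolynomial.pderiv_mul, map_add, map_mul, eval_pderiv2_uPoly,
      eval_pderiv_uPoly, hu0]
    ring
  unfold hessQuad
  rw [hprod]
  have step : ∀ a : Fin n, (∑ b, v a * MvPolynomial.eval (x i)
      (MvPolynomial.pderiv a (MvPolynomial.pderiv b (uPoly (x i) * w))) * v b)
      = 2 * MvPolynomial.eval (x i) w * v a ^ 2 := by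
    intro a
    rw [Finset.sum_congr rfl (fun b _ => by rw [hE a b])]
    have : ∀ b : Fin n, v a * ((if a = b then (2:ℝ) else 0) * MvPolynomial.eval (x i) w) * v b
        = if a = b then 2 * MvPolynomial.eval (x i) w * (v a * v b) else 0 := by
      intro b
      by_cases h : a = b <;> simp [h] <;> ring
    rw [Finset.sum_congr rfl (fun b _ => this b), Finset.sum_ite_eq Finset.univ a]
    simp only [Finset.mem_univ, if_true]
    ring
  rw [Finset.sum_congr rfl (fun a _ => step a), ← Finset.mul_sum, hW]

end UPoly

end LemC

end AuxAll

theorem statement_11 {n k : ℕ} (S : Set (Fin n → ℝ)) (hS : IsCompact S)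
    (x : Fin k → Fin n → ℝ) (hdist : Function.Injective x)
    (hint : ∀ i, x i ∈ interior S)
    (f : MvPolynomial (Fin n) ℝ) (hzero : ∀ i, eval (x i) f = 0) :
    ((∀ y ∈ S, (∀ i, y ≠ x i) → 0 < eval y f) ∧
      ∀ i : Fin k, ∀ v : Fin n → ℝ, v ≠ 0 → 0 < hessQuad f (x i) v) ↔
    ∃ ε : ℝ, 0 < ε ∧ ∀ y ∈ S, ε * eval y (∏ i, uPoly (x i)) ≤ eval y f := by

  have hball : ∀ i : Fin k, ∃ r > 0, Metric.ball (x i) r ⊆ S := by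
    intro i
    have := hint i
    rw [mem_interior_iff_mem_nhds] at this
    exact Metric.mem_nhds_iff.mp this
  have hball_mem : ∀ (z y : Fin n → ℝ) (r : ℝ), 0 < r → (∑ a, (y a - z a)^2) < r^2 →
      y ∈ Metric.ball z r := by
    intro z y r hr hlt
    rw [Metric.mem_ball, dist_pi_lt_iff hr]
    intro b
    rw [Real.dist_eq]
    by_contra hcon
    push_neg at hcon
    have h1 : r^2 ≤ |y b - z b|^2 := pow_le_pow_left₀ hr.le hcon 2
    rw [sq_abs] at h1
    have h2 : (y b - z b)^2 ≤ ∑ a, (y a - z a)^2 :=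
      Finset.single_le_sum (f := fun a => (y a - z a)^2) (fun a _ => sq_nonneg _)
        (Finset.mem_univ b)
    linarith
  have hsum_cont : ∀ z : Fin n → ℝ, Continuous (fun y : Fin n → ℝ => ∑ a, (y a - z a)^2) :=
    fun z => continuous_finset_sum _ fun a _ => ((continuous_apply a).sub continuous_const).pow 2
  constructor
  · rintro ⟨hpos, hhess⟩
    by_cases hSne : S.Nonempty
    swap
    · exact ⟨1, one_pos, fun y hy => absurd ⟨y, hy⟩ hSne⟩
    obtain ⟨y₁, hy₁S, hy₁max⟩ := hS.exists_isMaxOn hSne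
      ((continuous_finset_sum Finset.univ fun j _ =>
        (MvPolynomial.continuous_eval (uPoly (x j)) : Continuous _)).continuousOn :
        ContinuousOn (fun y => ∑ j, MvPolynomial.eval y (uPoly (x j))) S)
    set B := max 1 (∑ j, MvPolynomial.eval y₁ (uPoly (x j))) with hB
    have hB1 : (1:ℝ) ≤ B := le_max_left _ _
    have hBpos : (0:ℝ) < B := lt_of_lt_of_le one_pos hB1
    have hu_nonneg : ∀ (y : Fin n → ℝ) (j : Fin k), 0 ≤ MvPolynomial.eval y (uPoly (x j)) := by
      intro y j
      rw [eval_uPolyE]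
      exact sum_sq_nonneg _ _
    have hBb : ∀ y ∈ S, ∀ j : Fin k, MvPolynomial.eval y (uPoly (x j)) ≤ B := by
      intro y hy j
      calc MvPolynomial.eval y (uPoly (x j))
          ≤ ∑ j', MvPolynomial.eval y (uPoly (x j')) :=
            Finset.single_le_sum (fun j' _ => hu_nonneg y j') (Finset.mem_univ j)
        _ ≤ ∑ j', MvPolynomial.eval y₁ (uPoly (x j')) := hy₁max hy
        _ ≤ B := le_max_right _ _
    have hprod_le : ∀ y ∈ S, ∀ T : Finset (Fin k),
        ∏ j ∈ T, MvPolynomial.eval y (uPoly (x j)) ≤ B ^ T.card := by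
      intro y hy T
      calc ∏ j ∈ T, MvPolynomial.eval y (uPoly (x j)) ≤ ∏ _j ∈ T, B :=
            Finset.prod_le_prod (fun j _ => hu_nonneg y j) (fun j _ => hBb y hy j)
        _ = B ^ T.card := Finset.prod_const B
    have hprod_nonneg : ∀ (y : Fin n → ℝ) (T : Finset (Fin k)),
        0 ≤ ∏ j ∈ T, MvPolynomial.eval y (uPoly (x j)) :=
      fun y T => Finset.prod_nonneg fun j _ => hu_nonneg y j
    have hptdata : ∀ i : Fin k, ∃ c δ : ℝ, 0 < c ∧ 0 < δ ∧
        ∀ y : Fin n → ℝ, (∑ a, (y a - x i a)^2) < δ →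
          c * ∑ a, (y a - x i a)^2 ≤ MvPolynomial.eval y f := by
      intro i
      obtain ⟨r, hr0, hrball⟩ := hball i
      set T : Finset ℝ :=
        insert 1 ((Finset.univ.erase i).image fun j => ∑ c, (x j c - x i c)^2) with hT
      have hTne : T.Nonempty := ⟨1, Finset.mem_insert_self _ _⟩
      set m := T.min' hTne with hm
      have hm_pos : 0 < m := by
        rw [hm]
        rw [Finset.lt_min'_iff]
        intro b hb
        rcases Finset.mem_insert.mp hb with hb1 | hb2
        · rw [hb1]; exact one_pos
        · obtain ⟨j, hj, hjb⟩ := Finset.mem_image.mp hb2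
          rw [← hjb]
          apply sum_sq_pos_of_ne
          intro he
          exact (Finset.mem_erase.mp hj).1 (hdist he)
      have hm_le : ∀ j : Fin k, j ≠ i → m ≤ ∑ c, (x j c - x i c)^2 := by
        intro j hj
        apply Finset.min'_le
        exact Finset.mem_insert_of_mem (Finset.mem_image.mpr
          ⟨j, Finset.mem_erase.mpr ⟨hj, Finset.mem_univ j⟩, rfl⟩)
      set δ0 := min (r^2) m with hδ0def
      have hδ0 : 0 < δ0 := lt_min (pow_pos hr0 2) hm_pos
      have hf_nonneg : ∀ y : Fin n → ℝ, (∑ a, (y a - x i a)^2) < δ0 →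
          0 ≤ MvPolynomial.eval y f := by
        intro y hy
        have hyS : y ∈ S := hrball (hball_mem (x i) y r hr0
          (lt_of_lt_of_le hy (min_le_left _ _)))
        by_cases hyx : y = x i
        · rw [hyx, hzero i]
        · have hyne : ∀ j, y ≠ x j := by
            intro j he
            by_cases hj : j = i
            · exact hyx (hj ▸ he)
            · have h1 := hm_le j hj
              have h2 : (∑ a, (y a - x i a)^2) = ∑ c, (x j c - x i c)^2 := by
                rw [he]
              have h3 : δ0 ≤ m := min_le_right _ _
              linarith
          exact le_of_lt (hpos y hyS hyne)
      have hgrad : ∀ v, gradDot f (x i) v = 0 :=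
        fun v => (lemB (x i) f (hzero i) hδ0 hf_nonneg v).1
      exact lemC (x i) f (hzero i) hgrad (fun v hv => hhess i v hv)
    choose cc δδ hcc hδδ hgrow using hptdata
    set K := S ∩ ⋂ i : Fin k, {y : Fin n → ℝ | δδ i ≤ ∑ a, (y a - x i a)^2} with hKdef
    have hKcomp : IsCompact K := hS.inter_right
      (isClosed_iInter fun i => isClosed_le continuous_const (hsum_cont (x i)))
    have hKout : ∃ ε2 : ℝ, 0 < ε2 ∧ ∀ y ∈ K,
        ε2 * MvPolynomial.eval y (∏ j, uPoly (x j)) ≤ MvPolynomial.eval y f := by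
      by_cases hKne : K.Nonempty
      · obtain ⟨y₀, hy₀K, hy₀min⟩ := hKcomp.exists_isMinOn hKne
          ((MvPolynomial.continuous_eval f).continuousOn :
            ContinuousOn (fun y => MvPolynomial.eval y f) K)
        have hy₀S : y₀ ∈ S := hy₀K.1
        have hy₀ne : ∀ j, y₀ ≠ x j := by
          intro j he
          have h1 : δδ j ≤ ∑ a, (y₀ a - x j a)^2 := Set.mem_iInter.mp hy₀K.2 j
          rw [he] at h1
          simp only [sub_self] at h1
          rw [Finset.sum_const] at h1
          simp at h1
          have := hδδ j
          linarith [h1]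
        set m0 := MvPolynomial.eval y₀ f with hm0def
        have hm0 : 0 < m0 := hpos y₀ hy₀S hy₀ne
        refine ⟨m0 / B^k, div_pos hm0 (pow_pos hBpos k), fun y hyK => ?_⟩
        have hyS : y ∈ S := hyK.1
        have h1 : MvPolynomial.eval y (∏ j, uPoly (x j)) ≤ B^k := by
          rw [map_prod]
          have := hprod_le y hyS Finset.univ
          rwa [Finset.card_univ, Fintype.card_fin] at this
        have h2 : 0 ≤ MvPolynomial.eval y (∏ j, uPoly (x j)) := by
          rw [map_prod]
          exact hprod_nonneg y Finset.univ
        calc m0 / B^k * MvPolynomial.eval y (∏ j, uPoly (x j))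
            ≤ m0 / B^k * B^k :=
              mul_le_mul_of_nonneg_left h1 (le_of_lt (div_pos hm0 (pow_pos hBpos k)))
          _ = m0 := div_mul_cancel₀ m0 (ne_of_gt (pow_pos hBpos k))
          _ ≤ MvPolynomial.eval y f := hy₀min hyK
      · exact ⟨1, one_pos, fun y hy => absurd ⟨y, hy⟩ hKne⟩
    obtain ⟨ε2, hε2, hKbound⟩ := hKout
    set Tε : Finset ℝ := insert ε2 (Finset.univ.image fun i => cc i / B^(k-1)) with hTεdef
    have hTεne : Tε.Nonempty := ⟨ε2, Finset.mem_insert_self _ _⟩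
    set ε := Tε.min' hTεne with hεdef
    have hεpos : 0 < ε := by
      rw [hεdef, Finset.lt_min'_iff]
      intro b hb
      rcases Finset.mem_insert.mp hb with hb1 | hb2
      · rw [hb1]; exact hε2
      · obtain ⟨i, _, hib⟩ := Finset.mem_image.mp hb2
        rw [← hib]
        exact div_pos (hcc i) (pow_pos hBpos _)
    refine ⟨ε, hεpos, fun y hyS => ?_⟩
    have hu_all_nonneg : 0 ≤ MvPolynomial.eval y (∏ j, uPoly (x j)) := by
      rw [map_prod]; exact hprod_nonneg y Finset.univ
    by_cases hnear : ∃ i, (∑ a, (y a - x i a)^2) < δδ i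
    · obtain ⟨i, hi⟩ := hnear
      have hu : MvPolynomial.eval y (∏ j, uPoly (x j))
          = (∑ a, (y a - x i a)^2) * ∏ j ∈ Finset.univ.erase i,
              MvPolynomial.eval y (uPoly (x j)) := by
        rw [map_prod, ← Finset.mul_prod_erase Finset.univ _ (Finset.mem_univ i), eval_uPolyE]
      have hcard : (Finset.univ.erase i).card = k - 1 := by
        rw [Finset.card_erase_of_mem (Finset.mem_univ i), Finset.card_univ, Fintype.card_fin]
      have hrest : ∏ j ∈ Finset.univ.erase i, MvPolynomial.eval y (uPoly (x j)) ≤ B^(k-1) := by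
        have := hprod_le y hyS (Finset.univ.erase i)
        rwa [hcard] at this
      have hεi : ε ≤ cc i / B^(k-1) := Finset.min'_le _ _
        (Finset.mem_insert_of_mem (Finset.mem_image.mpr ⟨i, Finset.mem_univ i, rfl⟩))
      have hs_nonneg := sum_sq_nonneg y (x i)
      have hBp : (B:ℝ)^(k-1) ≠ 0 := ne_of_gt (pow_pos hBpos _)
      calc ε * MvPolynomial.eval y (∏ j, uPoly (x j))
          ≤ (cc i / B^(k-1)) * MvPolynomial.eval y (∏ j, uPoly (x j)) :=
            mul_le_mul_of_nonneg_right hεi hu_all_nonneg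
        _ = (cc i / B^(k-1)) * ((∑ a, (y a - x i a)^2) * ∏ j ∈ Finset.univ.erase i,
              MvPolynomial.eval y (uPoly (x j))) := by rw [hu]
        _ ≤ (cc i / B^(k-1)) * ((∑ a, (y a - x i a)^2) * B^(k-1)) := by
            apply mul_le_mul_of_nonneg_left
              (mul_le_mul_of_nonneg_left hrest hs_nonneg)
              (le_of_lt (div_pos (hcc i) (pow_pos hBpos _)))
        _ = cc i * ∑ a, (y a - x i a)^2 := by field_simp
        _ ≤ MvPolynomial.eval y f := hgrow i y hi
    · push_neg at hnear
      have hyK : y ∈ K := ⟨hyS, Set.mem_iInter.mpr fun i => hnear i⟩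
      have hεε2 : ε ≤ ε2 := Finset.min'_le _ _ (Finset.mem_insert_self _ _)
      calc ε * MvPolynomial.eval y (∏ j, uPoly (x j))
          ≤ ε2 * MvPolynomial.eval y (∏ j, uPoly (x j)) :=
            mul_le_mul_of_nonneg_right hεε2 hu_all_nonneg
        _ ≤ MvPolynomial.eval y f := hKbound y hyK
  · rintro ⟨ε, hε, hbd⟩
    constructor
    · intro y hyS hyne
      have hu : 0 < MvPolynomial.eval y (∏ j, uPoly (x j)) := by
        rw [map_prod]
        refine Finset.prod_pos fun j _ => ?_
        rw [eval_uPolyE]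
        exact sum_sq_pos_of_ne (hyne j)
      exact lt_of_lt_of_le (mul_pos hε hu) (hbd y hyS)
    · intro i v hv
      set p := f - MvPolynomial.C ε * ∏ j, uPoly (x j) with hpdef
      have hp0 : MvPolynomial.eval (x i) p = 0 := by
        rw [hpdef, map_sub, map_mul, MvPolynomial.eval_C, hzero i, map_prod]
        have : ∏ j, MvPolynomial.eval (x i) (uPoly (x j)) = 0 :=
          Finset.prod_eq_zero (Finset.mem_univ i) (by rw [eval_uPolyE]; simp)
        rw [this]
        ring
      obtain ⟨r, hr0, hrball⟩ := hball i
      have hppos : ∀ y : Fin n → ℝ, (∑ a, (y a - x i a)^2) < r^2 →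
          0 ≤ MvPolynomial.eval y p := by
        intro y hy
        have hyS : y ∈ S := hrball (hball_mem (x i) y r hr0 hy)
        rw [hpdef, map_sub, map_mul, MvPolynomial.eval_C]
        have := hbd y hyS
        linarith
      have hhq := (lemB (x i) p hp0 (pow_pos hr0 2) hppos v).2
      rw [hpdef, hessQuad_sub_C_mul, hessQuad_prodU] at hhq
      have hW : 0 < ∏ j ∈ Finset.univ.erase i, ∑ c, (x i c - x j c)^2 := by
        refine Finset.prod_pos fun j hj => sum_sq_pos_of_ne ?_
        intro he
        exact (Finset.mem_erase.mp hj).1 (hdist he.symm)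
      have hv2 : 0 < ∑ a, v a ^ 2 := by
        have h := sum_sq_pos_of_ne (y := v) (z := 0) hv
        simpa using h
      nlinarith [mul_pos (mul_pos (mul_pos hε two_pos) hW) hv2]
end

section
/- Let u ∈ ℝⁿ, f ∈ ℝ[X₁,…,Xₙ], g = (g₁,…,g_m) ∈ ℝ[X₁,…,Xₙ]^m, and let U be a neighborhood of u in ℝⁿ such that U ∩ S(g) is convex and is not a singleton. Suppose g₁,…,g_m are strictly quasiconcave at u, f(x) ≥ 0 for all x ∈ U ∩ S(g), and f(u) = g₁(u) = … = g_m(u) = 0. Then there exist λ₁,…,λ_m ∈ ℝ≥0 such that ∇f(u) = Σ_{i=1}^m λᵢ ∇gᵢ(u). -/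
open MvPolynomial Finset

noncomputable section AuxKKT
open Filter

private def Tcomp {n : ℕ} (u v : Fin n → ℝ) (g : MvPolynomial (Fin n) ℝ) : Polynomial ℝ :=
  MvPolynomial.aeval (fun j => Polynomial.C (u j) + Polynomial.C (v j) * Polynomial.X) g

private lemma Tcomp_eval {n : ℕ} (u v : Fin n → ℝ) (g : MvPolynomial (Fin n) ℝ) (t : ℝ) :
    (Tcomp u v g).eval t = eval (fun j => u j + t * v j) g := by
  induction g using MvPolynomial.induction_on with
  | C a => simp [Tcomp]
  | add p q hp hq => simp only [Tcomp, map_add, Polynomial.eval_add] at *; rw [hp, hq]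
  | mul_X p i hp =>
      simp only [Tcomp, map_mul, Polynomial.eval_mul] at *
      rw [hp]
      simp only [aeval_X, Polynomial.eval_add, Polynomial.eval_mul, Polynomial.eval_C,
        Polynomial.eval_X, eval_mul, eval_X]
      ring

private lemma gradDot_smul_add {n : ℕ} (f : MvPolynomial (Fin n) ℝ) (x v w : Fin n → ℝ) (c : ℝ) :
    gradDot f x (v + c • w) = gradDot f x v + c * gradDot f x w := by
  simp only [gradDot, Pi.add_apply, Pi.smul_apply, smul_eq_mul, mul_sum]
  rw [← Finset.sum_add_distrib]; apply Finset.sum_congr rfl; intro i _; ring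

private lemma Tcomp_coeffs {n : ℕ} (u v : Fin n → ℝ) (g : MvPolynomial (Fin n) ℝ) :
    (Tcomp u v g).coeff 0 = eval u g ∧ (Tcomp u v g).coeff 1 = gradDot g u v ∧
      (Tcomp u v g).coeff 2 = hessQuad g u v / 2 := by
  induction g using MvPolynomial.induction_on with
  | C a =>
      simp [Tcomp, gradDot, hessQuad, Polynomial.coeff_C]
  | add p q hp hq =>
      obtain ⟨h0, h1, h2⟩ := hp; obtain ⟨k0, k1, k2⟩ := hq
      simp only [Tcomp, map_add, Polynomial.coeff_add] at *
      refine ⟨by rw [h0, k0], ?_, ?_⟩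
      · rw [h1, k1]
        simp only [gradDot, map_add, eval_add, add_mul, Finset.sum_add_distrib]
      · rw [h2, k2, ← add_div]
        simp only [hessQuad]
        congr 1
        rw [← Finset.sum_add_distrib]; apply Finset.sum_congr rfl; intro a _
        rw [← Finset.sum_add_distrib]; apply Finset.sum_congr rfl; intro b _
        simp only [map_add, eval_add]; ring
  | mul_X p i hp =>
      obtain ⟨h0, h1, h2⟩ := hp
      have key : ∀ k : ℕ, (Tcomp u v (p * X i)).coeff (k+1) =
          (Tcomp u v p).coeff (k+1) * u i + (Tcomp u v p).coeff k * v i := by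
        intro k
        simp only [Tcomp, map_mul, aeval_X]
        rw [mul_add, Polynomial.coeff_add, Polynomial.coeff_mul_C,
          mul_comm (Polynomial.C (v i)) Polynomial.X, ← mul_assoc, Polynomial.coeff_mul_C,
          Polynomial.coeff_mul_X]
      have key0 : (Tcomp u v (p * X i)).coeff 0 = (Tcomp u v p).coeff 0 * u i := by
        simp only [Tcomp, map_mul, aeval_X]
        simp [Polynomial.mul_coeff_zero, Polynomial.coeff_add]
      have grad_mul : gradDot (p * X i) u v = gradDot p u v * u i + eval u p * v i := by
        simp only [gradDot, pderiv_mul, pderiv_X, map_add, eval_add, eval_mul, eval_X,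
          Pi.single_apply, apply_ite (eval u), map_one, map_zero, add_mul, mul_ite, ite_mul,
          mul_zero, zero_mul, mul_one]
        rw [Finset.sum_add_distrib, Finset.sum_ite_eq univ i]
        simp only [mem_univ, if_true]
        congr 1
        rw [Finset.sum_mul]
        apply Finset.sum_congr rfl; intro j _; ring
      have hess_mul : hessQuad (p * X i) u v =
          hessQuad p u v * u i + 2 * (gradDot p u v * v i) := by
        have step : ∀ a b : Fin n, eval u (pderiv a (pderiv b (p * X i))) =
            eval u (pderiv a (pderiv b p)) * u i
              + eval u (pderiv b p) * (if i = a then 1 else 0)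
              + eval u (pderiv a p) * (if i = b then 1 else 0) := by
          intro a b
          simp only [pderiv_mul, pderiv_X, Pi.single_apply, map_add, eval_add, eval_mul,
            eval_X, apply_ite (pderiv a), apply_ite (eval u), map_one, map_zero]
          simp [apply_ite (eval u)]
        have expand : ∀ a : Fin n, (∑ b, v a * eval u (pderiv a (pderiv b (p * X i))) * v b)
            = (∑ b, v a * eval u (pderiv a (pderiv b p)) * v b) * u i
              + (if i = a then (∑ b, eval u (pderiv b p) * v b) * v a else 0)
              + v a * eval u (pderiv a p) * v i := by
          intro a
          have e1 : ∀ b : Fin n, v a * eval u (pderiv a (pderiv b (p * X i))) * v b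
              = v a * eval u (pderiv a (pderiv b p)) * v b * u i
                + (if i = a then eval u (pderiv b p) * v b * v a else 0)
                + (if i = b then v a * eval u (pderiv a p) * v b else 0) := by
            intro b
            rw [step a b]
            split_ifs <;> ring
          rw [Finset.sum_congr rfl fun b _ => e1 b, Finset.sum_add_distrib,
            Finset.sum_add_distrib, ← Finset.sum_mul, Finset.sum_ite_irrel,
            Finset.sum_const_zero, Finset.sum_ite_eq univ i, ← Finset.sum_mul]
          simp only [mem_univ, if_true]
        rw [show hessQuad (p * X i) u v
            = ∑ a, ∑ b, v a * eval u (pderiv a (pderiv b (p * X i))) * v b from rfl,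
          Finset.sum_congr rfl fun a _ => expand a, Finset.sum_add_distrib,
          Finset.sum_add_distrib, ← Finset.sum_mul, Finset.sum_ite_eq univ i]
        simp only [mem_univ, if_true]
        have t3 : (∑ a, v a * eval u (pderiv a p) * v i)
            = (∑ a, eval u (pderiv a p) * v a) * v i := by
          rw [Finset.sum_mul]
          exact Finset.sum_congr rfl fun a _ => by ring
        rw [t3, show hessQuad p u v = ∑ a, ∑ b, v a * eval u (pderiv a (pderiv b p)) * v b
          from rfl, show gradDot p u v = ∑ a, eval u (pderiv a p) * v a from rfl]
        ring
      refine ⟨?_, ?_, ?_⟩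
      · rw [key0, h0]
        simp [map_mul, eval_mul, eval_X]
      · rw [show (1:ℕ) = 0 + 1 from rfl, key, h1, h0, grad_mul]
      · rw [show (2:ℕ) = 1 + 1 from rfl, key, h1, h2, hess_mul]
        ring

private lemma poly_pos (p : Polynomial ℝ) (h0 : p.coeff 0 = 0) (h1 : 0 < p.coeff 1) :
    ∀ᶠ t in nhdsWithin 0 (Set.Ioi 0), 0 < p.eval t := by
  obtain ⟨q, hq⟩ := (Polynomial.X_dvd_iff).2 h0
  have hq0 : 0 < q.eval 0 := by
    have : p.coeff 1 = q.coeff 0 := by rw [hq, Polynomial.coeff_X_mul]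
    rwa [← Polynomial.coeff_zero_eq_eval_zero, ← this]
  have hev : ∀ᶠ t in nhds (0:ℝ), 0 < q.eval t :=
    (isOpen_lt continuous_const q.continuous).mem_nhds hq0
  filter_upwards [nhdsWithin_le_nhds hev, self_mem_nhdsWithin] with t ht ht0
  rw [hq, Polynomial.eval_mul, Polynomial.eval_X]
  exact mul_pos ht0 ht

private lemma poly_neg (p : Polynomial ℝ) (h0 : p.coeff 0 = 0) (h1 : p.coeff 1 < 0) :
    ∀ᶠ t in nhdsWithin 0 (Set.Ioi 0), p.eval t < 0 := by
  have := poly_pos (-p) (by simp [h0]) (by simpa using h1)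
  filter_upwards [this] with t ht
  simpa using ht

private lemma poly_neg2 (p : Polynomial ℝ) (h0 : p.coeff 0 = 0) (h1 : p.coeff 1 = 0)
    (h2 : p.coeff 2 < 0) : ∀ᶠ t in nhdsWithin 0 (Set.Ioi 0), p.eval t < 0 := by
  obtain ⟨q, hq⟩ := (Polynomial.X_pow_dvd_iff (n := 2)).2 (by
    intro d hd; interval_cases d <;> assumption)
  have hq0 : q.eval 0 < 0 := by
    have : p.coeff 2 = q.coeff 0 := by
      rw [hq, show (2:ℕ) = 0 + 2 from rfl, Polynomial.coeff_X_pow_mul]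
    rwa [← Polynomial.coeff_zero_eq_eval_zero, ← this]
  have hev : ∀ᶠ t in nhds (0:ℝ), q.eval t < 0 :=
    (isOpen_lt q.continuous continuous_const).mem_nhds hq0
  filter_upwards [nhdsWithin_le_nhds hev, self_mem_nhdsWithin] with t ht ht0
  rw [hq, Polynomial.eval_mul, Polynomial.eval_pow, Polynomial.eval_X]
  exact mul_neg_of_pos_of_neg (pow_pos ht0 2) ht

private lemma coeff1_nonneg (p : Polynomial ℝ) (h0 : p.coeff 0 = 0)
    (h : ∀ᶠ t in nhdsWithin 0 (Set.Ioi 0), 0 ≤ p.eval t) : 0 ≤ p.coeff 1 := by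
  by_contra hneg
  obtain ⟨t, ht1, ht2⟩ := (h.and (poly_neg p h0 (lt_of_not_ge hneg))).exists
  exact absurd (ht1.trans_lt ht2) (lt_irrefl 0)

private lemma cone_farkas {n m : ℕ} (w : Fin m → (Fin n → ℝ)) (d : Fin n → ℝ)
    (hd : ∀ i, 0 < ∑ j, w i j * d j) (F : Fin n → ℝ)
    (hF : ∀ v : Fin n → ℝ, (∀ i, 0 ≤ ∑ j, w i j * v j) → 0 ≤ ∑ j, F j * v j) :
    ∃ lam : Fin m → ℝ, (∀ i, 0 ≤ lam i) ∧ F = ∑ i, lam i • w i := by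
  set K : Set (Fin n → ℝ) :=
    {x | ∃ lam : Fin m → ℝ, (∀ i, 0 ≤ lam i) ∧ x = ∑ i, lam i • w i} with hK
  have Kconv : Convex ℝ K := by
    rintro x ⟨a, ha, rfl⟩ y ⟨b, hb, rfl⟩ s t hs ht hst
    refine ⟨fun i => s * a i + t * b i,
      fun i => add_nonneg (mul_nonneg hs (ha i)) (mul_nonneg ht (hb i)), ?_⟩
    rw [Finset.smul_sum, Finset.smul_sum, ← Finset.sum_add_distrib]
    apply Finset.sum_congr rfl; intro i _
    rw [add_smul, smul_smul, smul_smul]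
  have K0 : (0 : Fin n → ℝ) ∈ K := ⟨0, fun i => le_refl 0, by simp⟩
  have Kclosed : IsClosed K := by
    rcases Nat.eq_zero_or_pos m with hm | hm
    · subst hm
      have : K = {0} := by
        ext x
        simp only [hK, Set.mem_setOf_eq, Set.mem_singleton_iff]
        constructor
        · rintro ⟨lam, -, rfl⟩; simp
        · rintro rfl; exact ⟨0, fun i => le_refl 0, by simp⟩
      rw [this]; exact isClosed_singleton
    · apply IsSeqClosed.isClosed
      intro xk x hxk hx
      choose lamk hlamk hxeq using hxk
      set a : Fin m → ℝ := fun i => ∑ j, w i j * d j with ha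
      obtain ⟨i0⟩ : Nonempty (Fin m) := ⟨⟨0, hm⟩⟩
      set c : ℝ := Finset.univ.inf' ⟨i0, mem_univ i0⟩ a with hc
      have hcpos : 0 < c := by
        rw [hc]
        exact (Finset.lt_inf'_iff _).2 fun i _ => hd i
      have hcle : ∀ i, c ≤ a i := fun i => Finset.inf'_le _ (mem_univ i)
      set s : ℕ → ℝ := fun k => ∑ j, xk k j * d j with hs
      have hsk : ∀ k, s k = ∑ i, lamk k i * a i := by
        intro k
        rw [hs]
        simp only [hxeq, Finset.sum_apply, Pi.smul_apply, smul_eq_mul, Finset.sum_mul]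
        rw [Finset.sum_comm]
        apply Finset.sum_congr rfl; intro i _
        rw [ha, Finset.mul_sum]
        apply Finset.sum_congr rfl; intro j _; ring
      have hstend : Tendsto s atTop (nhds (∑ j, x j * d j)) := by
        apply tendsto_finset_sum
        intro j _
        exact ((tendsto_pi_nhds.1 hx) j).mul tendsto_const_nhds
      obtain ⟨B, hB⟩ := hstend.bddAbove_range
      have hBs : ∀ k, s k ≤ B := fun k => hB (Set.mem_range_self k)
      have hbound : ∀ k i, lamk k i ≤ B / c := by
        intro k i
        rw [le_div_iff₀ hcpos]
        calc lamk k i * c ≤ lamk k i * a i :=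
              mul_le_mul_of_nonneg_left (hcle i) (hlamk k i)
          _ ≤ ∑ i', lamk k i' * a i' := by
              apply Finset.single_le_sum (f := fun i' => lamk k i' * a i') _ (mem_univ i)
              intro i' _
              exact mul_nonneg (hlamk k i') (le_of_lt (lt_of_lt_of_le hcpos (hcle i')))
          _ ≤ B := by rw [← hsk]; exact hBs k
      have hbox : ∀ k, lamk k ∈ Set.Icc (0 : Fin m → ℝ) (fun _ => B / c) :=
        fun k => ⟨fun i => hlamk k i, fun i => hbound k i⟩
      obtain ⟨lam, hlam, φ, hφ, hconv⟩ :=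
        (isCompact_Icc (a := (0 : Fin m → ℝ)) (b := fun _ => B / c)).tendsto_subseq hbox
      refine ⟨lam, fun i => hlam.1 i, ?_⟩
      have hL : Continuous (fun t : Fin m → ℝ => ∑ i, t i • w i) := by
        apply continuous_finset_sum
        intro i _
        exact (continuous_apply i).smul continuous_const
      have h1 : Tendsto (fun k => xk (φ k)) atTop (nhds (∑ i, lam i • w i)) := by
        have he : (fun k => xk (φ k)) = (fun t : Fin m → ℝ => ∑ i, t i • w i) ∘ (lamk ∘ φ) := by
          funext k; exact hxeq (φ k)
        rw [he]
        exact (hL.tendsto lam).comp hconv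
      have h2 : Tendsto (fun k => xk (φ k)) atTop (nhds x) := hx.comp hφ.tendsto_atTop
      exact tendsto_nhds_unique h2 h1
  by_contra hFK
  have hFK' : F ∉ K := fun h => hFK (by obtain ⟨lam, h1, h2⟩ := h; exact ⟨lam, h1, h2⟩)
  obtain ⟨f, u0, hfu, hsep⟩ := geometric_hahn_banach_point_closed Kconv Kclosed hFK'
  have hu0 : u0 < 0 := by simpa using hsep 0 K0
  have hfw : ∀ i, 0 ≤ f (w i) := by
    intro i
    by_contra hneg
    push_neg at hneg
    set t : ℝ := (u0 - 1) / f (w i) with ht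
    have htpos : 0 < t := div_pos_of_neg_of_neg (by linarith) hneg
    have hmem : t • w i ∈ K := by
      refine ⟨fun i' => if i' = i then t else 0,
        fun i' => by by_cases h : i' = i <;> simp [h, le_of_lt htpos], ?_⟩
      simp [ite_smul, Finset.sum_ite_eq']
    have hlt := hsep _ hmem
    rw [map_smul, smul_eq_mul, ht, div_mul_cancel₀ _ (ne_of_lt hneg)] at hlt
    linarith
  set v : Fin n → ℝ := fun j => f (fun k => if j = k then 1 else 0) with hv
  have hrep : ∀ x : Fin n → ℝ, f x = ∑ j, x j * v j := by
    intro x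
    conv_lhs => rw [pi_eq_sum_univ x]
    rw [map_sum]
    apply Finset.sum_congr rfl; intro j _
    rw [map_smul, smul_eq_mul, hv]
  have hkey := hF v (fun i => by rw [← hrep (w i)]; exact hfw i)
  rw [← hrep F] at hkey
  linarith

end AuxKKT

theorem statement_14 {n m : ℕ} (u : Fin n → ℝ) (f : MvPolynomial (Fin n) ℝ)
    (g : Fin m → MvPolynomial (Fin n) ℝ) (U : Set (Fin n → ℝ)) (hU : U ∈ nhds u)
    (hconv : Convex ℝ (U ∩ Sset g)) (hns : ¬ ∃ z, U ∩ Sset g = {z})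
    (hqc : ∀ i, StrictQuasiconcaveAt (g i) u)
    (hf : ∀ y ∈ U ∩ Sset g, 0 ≤ eval y f)
    (hfu : eval u f = 0) (hgu : ∀ i, eval u (g i) = 0) :
    ∃ lam : Fin m → ℝ, (∀ i, 0 ≤ lam i) ∧
      ∀ j : Fin n, eval u (pderiv j f) = ∑ i, lam i * eval u (pderiv j (g i)) := by
  classical
  have huS : u ∈ U ∩ Sset g := ⟨mem_of_mem_nhds hU, fun i => le_of_eq (hgu i).symm⟩
  obtain ⟨w0, hw0S, hw0ne⟩ : ∃ w0 ∈ U ∩ Sset g, w0 ≠ u := by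
    by_contra h
    push_neg at h
    exact hns ⟨u, Set.eq_singleton_iff_unique_mem.2 ⟨huS, fun z hz => h z hz⟩⟩
  set dvec : Fin n → ℝ := w0 - u with hdv
  have hdne : dvec ≠ 0 := sub_ne_zero.2 hw0ne
  have hseg : ∀ t : ℝ, t ∈ Set.Icc (0:ℝ) 1 → (fun j => u j + t * dvec j) ∈ U ∩ Sset g := by
    intro t ht
    have h2 := hconv huS hw0S (by linarith [ht.2] : (0:ℝ) ≤ 1 - t) ht.1 (by ring)
    have he : (fun j => u j + t * dvec j) = (1 - t) • u + t • w0 := by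
      funext j
      simp only [hdv, Pi.add_apply, Pi.smul_apply, Pi.sub_apply, smul_eq_mul]
      ring
    rwa [he]
  -- every gᵢ has strictly positive directional derivative along dvec
  have hgrad_pos : ∀ i, 0 < gradDot (g i) u dvec := by
    intro i
    have hc0 : (Tcomp u dvec (g i)).coeff 0 = 0 := by
      rw [(Tcomp_coeffs u dvec (g i)).1]; exact hgu i
    have hcontra : ¬ (∀ᶠ t in nhdsWithin 0 (Set.Ioi 0), (Tcomp u dvec (g i)).eval t < 0) := by
      intro hev
      have hI : Set.Ioo (0:ℝ) 1 ∈ nhdsWithin 0 (Set.Ioi 0) :=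
        Ioo_mem_nhdsGT_of_mem ⟨le_refl 0, one_pos⟩
      obtain ⟨t, ht1, ht2⟩ := (hev.and hI).exists
      have := (hseg t ⟨le_of_lt ht2.1, le_of_lt ht2.2⟩).2 i
      rw [Tcomp_eval] at ht1
      exact absurd (lt_of_le_of_lt this ht1) (lt_irrefl 0)
    rcases lt_trichotomy (gradDot (g i) u dvec) 0 with hlt | heq | hgt
    · exact absurd (poly_neg _ hc0
        (by rw [(Tcomp_coeffs u dvec (g i)).2.1]; exact hlt)) hcontra
    · refine absurd (poly_neg2 _ hc0
        (by rw [(Tcomp_coeffs u dvec (g i)).2.1]; exact heq) ?_) hcontra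
      rw [(Tcomp_coeffs u dvec (g i)).2.2]
      have := hqc i dvec hdne heq
      linarith
    · exact hgt
  -- key inequality: the gradient of f is nonnegative on the dual directions
  have hkey : ∀ v : Fin n → ℝ, (∀ i, 0 ≤ gradDot (g i) u v) → 0 ≤ gradDot f u v := by
    intro v hv
    have hstep : ∀ ε : ℝ, 0 < ε → 0 ≤ gradDot f u v + ε * gradDot f u dvec := by
      intro ε hε
      set z : Fin n → ℝ := v + ε • dvec with hz
      have hzpos : ∀ i, 0 < gradDot (g i) u z := by
        intro i
        rw [hz, gradDot_smul_add]
        exact add_pos_of_nonneg_of_pos (hv i) (mul_pos hε (hgrad_pos i))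
      have hcont : Continuous (fun t : ℝ => (fun j => u j + t * z j)) := by
        apply continuous_pi
        intro j
        exact continuous_const.add (continuous_id.mul continuous_const)
      have htU : ∀ᶠ t in nhdsWithin 0 (Set.Ioi 0), (fun j => u j + t * z j) ∈ U := by
        apply nhdsWithin_le_nhds
        have h0 : Filter.Tendsto (fun t : ℝ => (fun j => u j + t * z j)) (nhds 0)
            (nhds u) := by
          have := hcont.tendsto 0
          simpa using this
        exact h0.eventually_mem hU
      have htS : ∀ᶠ t in nhdsWithin 0 (Set.Ioi 0),
          ∀ i, 0 < eval (fun j => u j + t * z j) (g i) := by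
        rw [Filter.eventually_all]
        intro i
        have hpos := poly_pos (Tcomp u z (g i))
          (by rw [(Tcomp_coeffs u z (g i)).1]; exact hgu i)
          (by rw [(Tcomp_coeffs u z (g i)).2.1]; exact hzpos i)
        filter_upwards [hpos] with t ht
        rwa [Tcomp_eval] at ht
      have hev : ∀ᶠ t in nhdsWithin 0 (Set.Ioi 0), 0 ≤ (Tcomp u z f).eval t := by
        filter_upwards [htU, htS] with t h1 h2
        rw [Tcomp_eval]
        exact hf _ ⟨h1, fun i => le_of_lt (h2 i)⟩
      have hc1 := coeff1_nonneg (Tcomp u z f)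
        (by rw [(Tcomp_coeffs u z f).1]; exact hfu) hev
      rw [(Tcomp_coeffs u z f).2.1, hz, gradDot_smul_add] at hc1
      exact hc1
    rcases le_or_gt (gradDot f u dvec) 0 with he | he
    · have := hstep 1 one_pos
      nlinarith [hstep 1 one_pos]
    · apply le_of_forall_pos_le_add
      intro δ hδ
      have h1 := hstep (δ / gradDot f u dvec) (div_pos hδ he)
      have h2 : δ / gradDot f u dvec * gradDot f u dvec = δ :=
        div_mul_cancel₀ _ (ne_of_gt he)
      linarith
  obtain ⟨lam, hlam, hFeq⟩ := cone_farkas (fun i j => eval u (pderiv j (g i))) dvec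
    (fun i => hgrad_pos i) (fun j => eval u (pderiv j f)) (fun v hv => hkey v hv)
  refine ⟨lam, hlam, fun j => ?_⟩
  have := congrFun hFeq j
  simpa [Finset.sum_apply] using this
end
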